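/- arXiv:1511.01045 — 5 statements merged into one kernel-verified Lean document; each statement's English description precedes it below -/
import Mathlib

section
/- Every countable Hausdorff topological group G has a subset A that is closed and discrete (in the topology of G) such that G = AA⁻¹, i.e., every element of G is a product a·b⁻¹ with a, b ∈ A. -/
open Pointwise Set Filter Topology

section Aux

variable {X : Type*} [TopologicalSpace X] [T1Space X]

/-- If every point has a neighborhood meeting `A` in a finite set, then `A` is closed
and discrete. -/
lemma closed_and_discrete_of_finite_nhds {A : Set X}
    (h : ∀ p : X, ∃ N ∈ 𝓝 p, (N ∩ A).Finite) :
    IsClosed A ∧ DiscreteTopology A := by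
  have hcl : ∀ p : X, p ∈ closure A → p ∈ A := by
    intro p hp
    obtain ⟨N, hN, hfin⟩ := h p
    have h1 : p ∈ closure (N ∩ A) := by
      rw [mem_closure_iff_nhds] at hp ⊢
      intro t ht
      obtain ⟨z, hz⟩ := hp (t ∩ N) (inter_mem ht hN)
      exact ⟨z, ⟨hz.1.1, hz.1.2, hz.2⟩⟩
    have := hfin.isClosed.closure_subset h1
    exact this.2
  constructor
  · exact isClosed_of_closure_subset (fun p hp => hcl p hp)
  · rw [discreteTopology_subtype_iff]
    intro x hx
    obtain ⟨N, hN, hfin⟩ := h x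
    have key : x ∉ closure (A \ {x}) := by
      intro hc
      rw [mem_closure_iff_nhds] at hc
      have hfin' : ((N ∩ A) \ {x}).Finite := hfin.diff
      have hcl' : IsClosed ((N ∩ A) \ {x}) := hfin'.isClosed
      have hxmem : x ∈ (((N ∩ A) \ {x})ᶜ : Set X) := by simp
      obtain ⟨z, hz1, hz2⟩ := hc ((((N ∩ A) \ {x})ᶜ : Set X) ∩ N)
        (inter_mem (hcl'.isOpen_compl.mem_nhds hxmem) hN)
      exact hz1.1 ⟨⟨hz1.2, hz2.1⟩, hz2.2⟩
    have heq : 𝓝[≠] x ⊓ 𝓟 A = 𝓝[A \ {x}] x := by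
      rw [nhdsWithin, nhdsWithin, inf_assoc, inf_principal]
      congr 1
      rw [Set.diff_eq, Set.inter_comm]
    rw [heq]
    rw [mem_closure_iff_nhdsWithin_neBot] at key
    exact not_neBot.mp key

end Aux

section GroupSec

variable {G : Type*} [Group G] [TopologicalSpace G] [IsTopologicalGroup G] [T2Space G]

/-- Uniform separation of two distinct points. -/
lemma exists_sep {y z : G} (h : y ≠ z) :
    ∃ V ∈ 𝓝 (1 : G), ∀ a ∈ V, ∀ b ∈ V, y * a ≠ z * b := by
  have h1 : ({(z⁻¹ * y)}ᶜ : Set G) ∈ 𝓝 (1 : G) := by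
    apply IsOpen.mem_nhds isOpen_compl_singleton
    simp only [mem_compl_iff, mem_singleton_iff]
    intro hc
    apply h
    exact (inv_mul_eq_one.mp hc.symm).symm
  obtain ⟨V, hV, hsplit⟩ := exists_nhds_split_inv h1
  refine ⟨V, hV, ?_⟩
  intro a ha b hb heq
  have h2 : b / a ∈ ({(z⁻¹ * y)}ᶜ : Set G) := hsplit b hb a ha
  apply h2
  simp only [mem_singleton_iff, div_eq_mul_inv]
  have h3 : z⁻¹ * (y * a) * a⁻¹ = z⁻¹ * (z * b) * a⁻¹ := by rw [heq]
  have h4 : z⁻¹ * y = b * a⁻¹ := by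
    calc z⁻¹ * y = z⁻¹ * (y * a) * a⁻¹ := by group
      _ = z⁻¹ * (z * b) * a⁻¹ := h3
      _ = b * a⁻¹ := by group
  exact h4.symm

/-- Four-fold splitting of a neighborhood of 1. -/
lemma split4 {V : Set G} (hV : V ∈ 𝓝 (1 : G)) :
    ∃ W ∈ 𝓝 (1 : G), W * W * W * W ⊆ V := by
  obtain ⟨V₁, hV₁, h1⟩ := exists_nhds_one_split hV
  obtain ⟨W, hW, h2⟩ := exists_nhds_one_split hV₁
  refine ⟨W, hW, ?_⟩
  rintro x hx
  rw [mul_assoc (W * W) W W] at hx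
  obtain ⟨u, hu, v, hv, rfl⟩ := hx
  obtain ⟨a, ha, b, hb, rfl⟩ := hu
  obtain ⟨c, hc, d, hd, rfl⟩ := hv
  exact h1 _ (h2 a ha b hb) _ (h2 c hc d hd)

/-- Existence of two separated children within a given neighborhood. -/
lemma exists_children (hne : ∀ N ∈ 𝓝 (1 : G), ∃ z ∈ N, z ≠ (1 : G)) (y : G) (W : Set G) (hW : W ∈ 𝓝 (1 : G)) :
    ∃ c : Bool → G × Set G,
      (∀ i, (c i).2 ∈ 𝓝 (1 : G)) ∧
      (∀ i, (c i).1 ∈ y • W) ∧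
      (∀ i, (c i).2 * (c i).2 * (c i).2 * (c i).2 ⊆ W) ∧
      Disjoint ((c false).1 • ((c false).2 * (c false).2 * (c false).2 * (c false).2))
               ((c true).1 • ((c true).2 * (c true).2 * (c true).2 * (c true).2)) := by
  obtain ⟨w, hwW, hw1⟩ := hne W hW
  have hyz : y ≠ y * w := by
    intro hc
    apply hw1
    exact mul_left_cancel (a := y) (by simpa using hc.symm : y * w = y * 1)
  obtain ⟨V, hV, hsep⟩ := exists_sep hyz
  obtain ⟨W', hW', hsub⟩ := split4 (inter_mem hW hV)
  refine ⟨fun i => (if i then y * w else y, W'), fun _ => hW', ?_, ?_, ?_⟩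
  · intro i
    cases i
    · exact ⟨1, mem_of_mem_nhds hW, by simp⟩
    · exact ⟨w, hwW, rfl⟩
  · intro i
    exact hsub.trans inter_subset_left
  · rw [Set.disjoint_left]
    rintro zz ⟨p, hp, rfl⟩ ⟨q, hq, hzq⟩
    simp only [if_true, if_false] at *
    have hpV : p ∈ V := (hsub.trans inter_subset_right) hp
    have hqV : q ∈ V := (hsub.trans inter_subset_right) hq
    exact hsep p hpV q hqV (by simpa [smul_eq_mul] using hzq.symm)

variable (hne : ∀ N ∈ 𝓝 (1 : G), ∃ z ∈ N, z ≠ (1 : G))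

/-- The binary tree of centers and neighborhoods. -/
noncomputable def tree (hne : ∀ N ∈ 𝓝 (1 : G), ∃ z ∈ N, z ≠ (1 : G)) :
    List Bool → {p : G × Set G // p.2 ∈ 𝓝 (1 : G)}
  | [] => ⟨((1 : G), (univ : Set G)), univ_mem⟩
  | i :: s =>
    ⟨(exists_children hne (tree hne s).1.1 (tree hne s).1.2 (tree hne s).2).choose i,
     (exists_children hne (tree hne s).1.1 (tree hne s).1.2 (tree hne s).2).choose_spec.1 i⟩

/-- Tree centers. -/
noncomputable def Yc (hne : ∀ N ∈ 𝓝 (1 : G), ∃ z ∈ N, z ≠ (1 : G)) (s : List Bool) : G :=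
  (tree hne s).1.1

/-- Tree neighborhoods. -/
noncomputable def Wc (hne : ∀ N ∈ 𝓝 (1 : G), ∃ z ∈ N, z ≠ (1 : G)) (s : List Bool) : Set G :=
  (tree hne s).1.2

lemma Wc_nhds (s : List Bool) : Wc hne s ∈ 𝓝 (1 : G) := (tree hne s).2

lemma one_mem_Wc (s : List Bool) : (1 : G) ∈ Wc hne s := mem_of_mem_nhds (Wc_nhds hne s)

lemma Yc_mem_child (i : Bool) (s : List Bool) :
    Yc hne (i :: s) ∈ Yc hne s • Wc hne s := by
  have h := (exists_children hne (tree hne s).1.1 (tree hne s).1.2 (tree hne s).2).choose_spec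
  exact h.2.1 i

lemma Wc_child_four (i : Bool) (s : List Bool) :
    Wc hne (i :: s) * Wc hne (i :: s) * Wc hne (i :: s) * Wc hne (i :: s) ⊆ Wc hne s := by
  have h := (exists_children hne (tree hne s).1.1 (tree hne s).1.2 (tree hne s).2).choose_spec
  exact h.2.2.1 i

lemma disjoint_children (s : List Bool) :
    Disjoint
      (Yc hne (false :: s) •
        (Wc hne (false :: s) * Wc hne (false :: s) * Wc hne (false :: s) * Wc hne (false :: s)))
      (Yc hne (true :: s) •
        (Wc hne (true :: s) * Wc hne (true :: s) * Wc hne (true :: s) * Wc hne (true :: s))) := by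
  have h := (exists_children hne (tree hne s).1.1 (tree hne s).1.2 (tree hne s).2).choose_spec
  exact h.2.2.2

lemma sq_subset_four {W : Set G} (h1 : (1 : G) ∈ W) : W * W ⊆ W * W * W * W := by
  intro x hx
  have h2 : x * 1 * 1 ∈ W * W * W * W :=
    Set.mul_mem_mul (Set.mul_mem_mul hx h1) h1
  simpa using h2

lemma Wc_child_sq (i : Bool) (s : List Bool) :
    Wc hne (i :: s) * Wc hne (i :: s) ⊆ Wc hne s :=
  (sq_subset_four (one_mem_Wc hne (i :: s))).trans (Wc_child_four hne i s)

/-- Any descendant's center lies in the doubled neighborhood of the ancestor. -/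
lemma Yc_desc (u : List Bool) : ∀ s : List Bool,
    Yc hne (u ++ s) ∈ Yc hne s • (Wc hne s * Wc hne s) := by
  induction u using List.reverseRecOn with
  | nil =>
    intro s
    exact ⟨1 * 1, Set.mul_mem_mul (one_mem_Wc hne s) (one_mem_Wc hne s), by simp⟩
  | append_singleton u i ih =>
    intro s
    have heq : (u ++ [i]) ++ s = u ++ (i :: s) := by simp
    rw [heq]
    obtain ⟨v, hv, he1⟩ := ih (i :: s)
    obtain ⟨w, hw, he2⟩ := Yc_mem_child hne i s
    refine ⟨w * v, Set.mul_mem_mul hw (Wc_child_sq hne i s hv), ?_⟩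
    simp only [smul_eq_mul] at he1 he2 ⊢
    rw [← he1, ← he2, mul_assoc]

/-- A small symmetric translate can meet descendant-centers of at most one child. -/
lemma key_lemma (s : List Bool) (c : G) (R : Set G) (hsym : R⁻¹ = R)
    (h0 : R ⊆ Wc hne (false :: s)) (_h1 : R ⊆ Wc hne (true :: s)) :
    ¬ ((∃ u, Yc hne (u ++ false :: s) ∈ c • R) ∧
       (∃ u, Yc hne (u ++ true :: s) ∈ c • R)) := by
  rintro ⟨⟨u0, hu0⟩, ⟨u1, hu1⟩⟩
  obtain ⟨r0, hr0, he0⟩ := hu0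
  obtain ⟨r1, hr1, he1⟩ := hu1
  simp only [smul_eq_mul] at he0 he1
  obtain ⟨v, hv, he2⟩ := Yc_desc hne u0 (false :: s)
  simp only [smul_eq_mul] at he2
  have hr0' : r0⁻¹ ∈ R := by rw [← hsym]; exact Set.inv_mem_inv.mpr hr0
  have hmem : Yc hne (u1 ++ true :: s) ∈ Yc hne (false :: s) •
      (Wc hne (false :: s) * Wc hne (false :: s) * Wc hne (false :: s) * Wc hne (false :: s)) := by
    refine ⟨v * r0⁻¹ * r1, ?_, ?_⟩
    · exact Set.mul_mem_mul (Set.mul_mem_mul hv (h0 hr0')) (h0 hr1)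
    · simp only [smul_eq_mul]
      rw [← he1]
      have h12 : Yc hne (false :: s) * (v * r0⁻¹ * r1) =
          (Yc hne (false :: s) * v) * (r0⁻¹ * r1) := by group
      rw [h12, he2, ← he0]
      group
  have hmem' : Yc hne (u1 ++ true :: s) ∈ Yc hne (true :: s) •
      (Wc hne (true :: s) * Wc hne (true :: s) * Wc hne (true :: s) * Wc hne (true :: s)) := by
    obtain ⟨v1, hv1, he3⟩ := Yc_desc hne u1 (true :: s)
    exact ⟨v1, sq_subset_four (one_mem_Wc hne (true :: s)) hv1, he3⟩
  exact Set.disjoint_left.mp (disjoint_children hne s) hmem hmem'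

/-- Finset of all strings of a given length. -/
def levelF : ℕ → Finset (List Bool)
  | 0 => {[]}
  | m + 1 => (levelF m).biUnion (fun s => {false :: s, true :: s})

lemma mem_levelF : ∀ s : List Bool, s ∈ levelF s.length := by
  intro s
  induction s with
  | nil => simp [levelF]
  | cons i s ih =>
    simp only [List.length_cons, levelF, Finset.mem_biUnion]
    exact ⟨s, ih, by cases i <;> simp⟩

def uptoF (m : ℕ) : Finset (List Bool) := (Finset.range (m + 1)).biUnion levelF

lemma mem_uptoF {s : List Bool} {m : ℕ} (h : s.length ≤ m) : s ∈ uptoF m := by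
  simp only [uptoF, Finset.mem_biUnion, Finset.mem_range]
  exact ⟨s.length, by omega, mem_levelF s⟩

/-- The symmetric neighborhoods used for avoidance. -/
noncomputable def Rset (hne : ∀ N ∈ 𝓝 (1 : G), ∃ z ∈ N, z ≠ (1 : G)) (k : ℕ) : Set G :=
  (⋂ s ∈ uptoF (2 * k + 4), Wc hne s) ∩ (⋂ s ∈ uptoF (2 * k + 4), Wc hne s)⁻¹

lemma Rcore_nhds (k : ℕ) : (⋂ s ∈ uptoF (2 * k + 4), Wc hne s) ∈ 𝓝 (1 : G) :=
  (Filter.biInter_finset_mem _).mpr (fun s _ => Wc_nhds hne s)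

lemma Rset_nhds (k : ℕ) : Rset hne k ∈ 𝓝 (1 : G) := by
  apply inter_mem (Rcore_nhds hne k)
  have heq : (⋂ s ∈ uptoF (2 * k + 4), Wc hne s)⁻¹ =
      (fun x : G => x⁻¹) ⁻¹' (⋂ s ∈ uptoF (2 * k + 4), Wc hne s) := by
    ext x; simp [Set.mem_inv]
  rw [heq]
  exact continuous_inv.continuousAt.preimage_mem_nhds (by simpa using Rcore_nhds hne k)

lemma Rset_symm (k : ℕ) : (Rset hne k)⁻¹ = Rset hne k := by
  rw [Rset, Set.inter_inv, inv_inv, Set.inter_comm]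

lemma Rset_subset {k : ℕ} {s : List Bool} (h : s.length ≤ 2 * k + 4) :
    Rset hne k ⊆ Wc hne s :=
  inter_subset_left.trans (Set.biInter_subset_of_mem (mem_uptoF h))

/-- Greedy descent: a point avoiding all required translates. -/
lemma greedy (xe : ℕ → G) (g : G) (n : ℕ) :
    ∃ a : G, ∀ k, k ≤ n →
      a ∉ xe k • Rset hne k ∧ a ∉ (g * xe k) • Rset hne k := by
  have main : ∀ ℓ : ℕ, ∃ s : List Bool, s.length = ℓ ∧ ∀ k, k ≤ n →
      ((2 * k + 1 ≤ ℓ → ∀ u, Yc hne (u ++ s) ∉ xe k • Rset hne k) ∧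
       (2 * k + 2 ≤ ℓ → ∀ u, Yc hne (u ++ s) ∉ (g * xe k) • Rset hne k)) := by
    intro ℓ
    induction ℓ with
    | zero => exact ⟨[], rfl, fun k _ => ⟨fun h => by omega, fun h => by omega⟩⟩
    | succ ℓ ih =>
      obtain ⟨s, hlen, hs⟩ := ih
      have inherit : ∀ (i : Bool) (S : Set G),
          (∀ u, Yc hne (u ++ s) ∉ S) → ∀ u, Yc hne (u ++ i :: s) ∉ S := by
        intro i S hS u
        have h5 : u ++ i :: s = (u ++ [i]) ++ s := by simp
        rw [h5]
        exact hS (u ++ [i])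
      by_cases hc : ∃ k, k ≤ n ∧ (ℓ + 1 = 2 * k + 1 ∨ ℓ + 1 = 2 * k + 2)
      · obtain ⟨k, hkn, hcase⟩ := hc
        set c : G := if ℓ + 1 = 2 * k + 1 then xe k else g * xe k with hc_def
        have hlen0 : (false :: s).length ≤ 2 * k + 4 := by
          simp only [List.length_cons, hlen]; omega
        have hlen1 : (true :: s).length ≤ 2 * k + 4 := by
          simp only [List.length_cons, hlen]; omega
        have hkey := key_lemma hne s c (Rset hne k) (Rset_symm hne k)
          (Rset_subset hne hlen0) (Rset_subset hne hlen1)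
        have hchoice : ∃ i : Bool, ∀ u, Yc hne (u ++ i :: s) ∉ c • Rset hne k := by
          by_contra hcon
          push_neg at hcon
          obtain ⟨u0, hu0⟩ := hcon false
          obtain ⟨u1, hu1⟩ := hcon true
          exact hkey ⟨⟨u0, by simpa using hu0⟩, ⟨u1, by simpa using hu1⟩⟩
        obtain ⟨i, hgood⟩ := hchoice
        refine ⟨i :: s, by simp [hlen], fun k' hk' => ⟨?_, ?_⟩⟩
        · intro hle u
          by_cases h2 : 2 * k' + 1 ≤ ℓ
          · exact inherit i _ ((hs k' hk').1 h2) u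
          · have heq1 : ℓ + 1 = 2 * k' + 1 := by omega
            have heq2 : ℓ + 1 = 2 * k + 1 := by
              rcases hcase with h | h
              · exact h
              · omega
            have hkk : k' = k := by omega
            subst hkk
            have hcc : c = xe k' := by rw [hc_def, if_pos heq2]
            rw [← hcc]
            exact hgood u
        · intro hle u
          by_cases h2 : 2 * k' + 2 ≤ ℓ
          · exact inherit i _ ((hs k' hk').2 h2) u
          · have heq1 : ℓ + 1 = 2 * k' + 2 := by omega
            have heq2 : ℓ + 1 = 2 * k + 2 := by
              rcases hcase with h | h
              · omega
              · exact h
            have hkk : k' = k := by omega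
            subst hkk
            have hcc : c = g * xe k' := by rw [hc_def, if_neg (by omega)]
            rw [← hcc]
            exact hgood u
      · refine ⟨false :: s, by simp [hlen], fun k hk => ⟨?_, ?_⟩⟩
        · intro hle u
          have h3 : 2 * k + 1 ≤ ℓ := by
            by_contra h4
            exact hc ⟨k, hk, Or.inl (by omega)⟩
          exact inherit false _ ((hs k hk).1 h3) u
        · intro hle u
          have h3 : 2 * k + 2 ≤ ℓ := by
            by_contra h4
            exact hc ⟨k, hk, Or.inr (by omega)⟩
          exact inherit false _ ((hs k hk).2 h3) u
  obtain ⟨s, _hlen, hs⟩ := main (2 * n + 2)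
  refine ⟨Yc hne s, fun k hk => ⟨?_, ?_⟩⟩
  · have h6 := (hs k hk).1 (by omega) []
    simpa using h6
  · have h6 := (hs k hk).2 (by omega) []
    simpa using h6

end GroupSec

/-- Every countable Hausdorff topological group `G` has a closed discrete subset `A`
such that `G = A * A⁻¹`. -/
theorem countable_group_eq_mul_inv_of_closed_discrete
    (G : Type*) [Group G] [TopologicalSpace G] [IsTopologicalGroup G]
    [T2Space G] [Countable G] :
    ∃ A : Set G, IsClosed A ∧ DiscreteTopology A ∧ A * A⁻¹ = Set.univ := by
  obtain ⟨xe, hxe⟩ := exists_surjective_nat G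
  by_cases hne : ∀ N ∈ 𝓝 (1 : G), ∃ z ∈ N, z ≠ (1 : G)
  · -- nondiscrete case
    have hA : ∀ n : ℕ, ∃ a : G, ∀ k, k ≤ n →
        a ∉ xe k • Rset hne k ∧ a ∉ (xe n * xe k) • Rset hne k :=
      fun n => greedy hne xe (xe n) n
    choose a ha using hA
    set b : ℕ → G := fun n => (xe n)⁻¹ * a n with hb_def
    refine ⟨Set.range a ∪ Set.range b, ?_⟩
    have loc : ∀ p : G, ∃ N ∈ 𝓝 p, (N ∩ (Set.range a ∪ Set.range b)).Finite := by
      intro p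
      obtain ⟨k, rfl⟩ := hxe p
      refine ⟨xe k • Rset hne k, ?_, ?_⟩
      · have h7 : xe k • Rset hne k = (fun y : G => (xe k)⁻¹ * y) ⁻¹' Rset hne k := by
          ext z
          rw [Set.mem_smul_set_iff_inv_smul_mem]
          simp [smul_eq_mul]
        rw [h7]
        apply (continuous_const.mul continuous_id).continuousAt.preimage_mem_nhds
        simpa using Rset_nhds hne k
      · apply Set.Finite.subset
          (Set.Finite.union ((Set.finite_Iio k).image a) ((Set.finite_Iio k).image b))
        rintro z ⟨hzN, hzA⟩
        rcases hzA with ⟨n, rfl⟩ | ⟨n, rfl⟩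
        · left
          refine ⟨n, ?_, rfl⟩
          simp only [Set.mem_Iio]
          by_contra hnk
          exact (ha n k (by omega)).1 hzN
        · right
          refine ⟨n, ?_, rfl⟩
          simp only [Set.mem_Iio]
          by_contra hnk
          apply (ha n k (by omega)).2
          rw [mul_smul, Set.mem_smul_set_iff_inv_smul_mem]
          simpa [hb_def, smul_eq_mul] using hzN
    obtain ⟨hcl, hdis⟩ := closed_and_discrete_of_finite_nhds loc
    refine ⟨hcl, hdis, ?_⟩
    rw [Set.eq_univ_iff_forall]
    intro z
    obtain ⟨n, rfl⟩ := hxe z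
    have hmem : a n * (b n)⁻¹ ∈
        (Set.range a ∪ Set.range b) * (Set.range a ∪ Set.range b)⁻¹ :=
      Set.mul_mem_mul (Or.inl ⟨n, rfl⟩) (Set.inv_mem_inv.mpr (Or.inr ⟨n, rfl⟩))
    have h8 : a n * (b n)⁻¹ = xe n := by
      rw [hb_def]; group
    rwa [h8] at hmem
  · -- discrete case: A = univ
    push_neg at hne
    obtain ⟨N, hN, hN1⟩ := hne
    have hsingleton : ∀ p : G, ({p} : Set G) ∈ 𝓝 p := by
      intro p
      have hpre : (fun y : G => p⁻¹ * y) ⁻¹' N ∈ 𝓝 p := by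
        apply (continuous_const.mul continuous_id).continuousAt.preimage_mem_nhds
        simpa using hN
      apply Filter.mem_of_superset hpre
      intro y hy
      have h9 : p⁻¹ * y = 1 := hN1 _ hy
      have h10 : p = y := inv_mul_eq_one.mp h9
      simp [h10]
    have loc : ∀ p : G, ∃ M ∈ 𝓝 p, (M ∩ (Set.univ : Set G)).Finite :=
      fun p => ⟨{p}, hsingleton p, by simp⟩
    obtain ⟨hcl, hdis⟩ := closed_and_discrete_of_finite_nhds loc
    refine ⟨Set.univ, hcl, hdis, ?_⟩
    rw [Set.eq_univ_iff_forall]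
    intro z
    have h11 : z * (1 : G)⁻¹ = z := by simp
    have := Set.mul_mem_mul (Set.mem_univ z)
      (Set.inv_mem_inv.mpr (Set.mem_univ (1 : G)) :
        (1 : G)⁻¹ ∈ (Set.univ : Set G)⁻¹)
    rwa [h11] at this
end

section
/- Let G be a countable Hausdorff topological group that is not totally bounded, i.e., there exists a neighborhood U of the identity such that G ≠ FU for every finite subset F of G. Then G has a closed discrete subset A such that G = AA⁻¹. -/
open Pointwise Filter Set

/-- A countable Hausdorff topological group that is not totally bounded
(there is a neighborhood `U` of the identity with `G ≠ F * U` for every finite `F`)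
has a closed discrete subset `A` with `G = A * A⁻¹`. -/
theorem not_totally_bounded_countable_group_eq_mul_inv
    (G : Type*) [Group G] [TopologicalSpace G] [IsTopologicalGroup G]
    [T2Space G] [Countable G]
    (hU : ∃ U ∈ nhds (1 : G), ∀ F : Finset G, (F : Set G) * U ≠ Set.univ) :
    ∃ A : Set G, IsClosed A ∧ DiscreteTopology A ∧ A * A⁻¹ = Set.univ := by
  classical
  obtain ⟨U, hU1, hUF⟩ := hU
  obtain ⟨g, hg⟩ := exists_surjective_nat G
  -- the finite "forbidden" set at stage n
  set F : ℕ → Finset G := fun n =>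
    (Finset.range (n+1)).image g ∪ (Finset.range (n+1)).image (fun m => (g n)⁻¹ * g m) with hF
  have hex : ∀ n : ℕ, ∃ x : G, x ∉ (F n : Set G) * U := by
    intro n
    by_contra h
    push_neg at h
    exact hUF (F n) (Set.eq_univ_of_forall h)
  choose a ha using hex
  set b : ℕ → G := fun n => g n * a n with hb
  -- key avoidance properties
  have haU : ∀ m n : ℕ, m ≤ n → a n ∉ g m • U := by
    intro m n hmn hmem
    apply ha n
    rw [mem_smul_set_iff_inv_smul_mem] at hmem
    refine ⟨g m, ?_, (g m)⁻¹ * a n, hmem, by group⟩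
    simp only [hF, Finset.coe_union, Set.mem_union, Finset.coe_image, Set.mem_image]
    exact Or.inl ⟨m, ⟨Finset.mem_range.mpr (Nat.lt_succ_of_le hmn), rfl⟩⟩
  have hbU : ∀ m n : ℕ, m ≤ n → b n ∉ g m • U := by
    intro m n hmn hmem
    apply ha n
    rw [mem_smul_set_iff_inv_smul_mem] at hmem
    refine ⟨(g n)⁻¹ * g m, ?_, (g m)⁻¹ * (g n * a n), hmem, by group⟩
    simp only [hF, Finset.coe_union, Set.mem_union, Finset.coe_image, Set.mem_image]
    exact Or.inr ⟨m, ⟨Finset.mem_range.mpr (Nat.lt_succ_of_le hmn), rfl⟩⟩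
  set A : Set G := Set.range a ∪ Set.range b with hA
  -- every translate x • U meets A in a finite set
  have hfin : ∀ x : G, ((x • U) ∩ A).Finite := by
    intro x
    obtain ⟨m, rfl⟩ := hg x
    have : (g m • U) ∩ A ⊆ (a '' {k | k < m}) ∪ (b '' {k | k < m}) := by
      rintro y ⟨hy, hyA⟩
      rcases hyA with ⟨n, rfl⟩ | ⟨n, rfl⟩
      · left
        refine ⟨n, ?_, rfl⟩
        by_contra hn
        exact haU m n (le_of_not_gt hn) hy
      · right
        refine ⟨n, ?_, rfl⟩
        by_contra hn
        exact hbU m n (le_of_not_gt hn) hy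
    exact Set.Finite.subset (((Set.finite_Iio m).image a).union ((Set.finite_Iio m).image b)) this
  have hxU : ∀ x : G, x • U ∈ nhds x := by
    intro x
    rw [← map_mul_left_nhds_one x]
    refine Filter.mem_map.mpr (Filter.mem_of_superset hU1 ?_)
    intro u hu
    exact ⟨u, hu, rfl⟩
  have hcd : IsClosed A ∧ DiscreteTopology A := by
    rw [← isDiscrete_iff_discreteTopology, isClosed_and_discrete_iff]
    intro x
    rw [Filter.disjoint_principal_right]
    have hs : IsClosed ((x • U ∩ A) \ {x}) :=
      (((hfin x).subset Set.diff_subset).isClosed)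
    have hxs : x ∈ ((x • U ∩ A) \ {x})ᶜ := by simp
    refine Filter.mem_inf_of_inter (Filter.inter_mem (hxU x) (hs.isOpen_compl.mem_nhds hxs))
      (Filter.mem_principal_self _) ?_
    rintro y ⟨⟨hyU, hys⟩, hyx⟩ hyA
    exact hys ⟨⟨hyU, hyA⟩, hyx⟩
  refine ⟨A, hcd.1, hcd.2, ?_⟩
  rw [Set.eq_univ_iff_forall]
  intro x
  obtain ⟨n, rfl⟩ := hg x
  exact ⟨b n, Or.inr ⟨n, rfl⟩, (a n)⁻¹, Set.inv_mem_inv.mpr (Or.inl ⟨n, rfl⟩), mul_inv_cancel_right _ _⟩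
end

section
/- Let H be a compact Hausdorff topological group and let G be a countable dense subgroup of H, endowed with the subspace topology. Then G has a subset A that is closed and discrete in G such that G = AA⁻¹. -/
open Pointwise

open MeasureTheory Filter Set Topology in
/-- Auxiliary lemma: a subset that is locally finite (every point has a neighborhood meeting
it in a finite set) in a T1 space is closed and discrete. -/
theorem aux_closed_discrete_of_locally_finite {X : Type*} [TopologicalSpace X] [T1Space X]
    (A : Set X) (h : ∀ x : X, ∃ V ∈ 𝓝 x, (A ∩ V).Finite) :
    IsClosed A ∧ DiscreteTopology A := by
  rw [← isDiscrete_iff_discreteTopology, isClosed_and_discrete_iff]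
  intro x
  obtain ⟨V, hV, hfin⟩ := h x
  rw [Filter.disjoint_principal_right]
  have hFclosed : IsClosed ((A ∩ V) \ {x}) := ((hfin.subset diff_subset).isClosed)
  have hmem : (V \ ((A ∩ V) \ {x})) ∩ {x}ᶜ ∈ 𝓝[≠] x := by
    refine Filter.inter_mem (mem_nhdsWithin_of_mem_nhds ?_) self_mem_nhdsWithin
    exact Filter.inter_mem hV (hFclosed.isOpen_compl.mem_nhds (by simp))
  filter_upwards [hmem] with y hy
  rintro hyA
  obtain ⟨⟨hyV, hyF⟩, hyx⟩ := hy
  exact hyF ⟨⟨hyA, hyV⟩, hyx⟩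

open MeasureTheory Filter Set Topology TopologicalSpace ENNReal in
/-- A countable dense subgroup `G` of a compact Hausdorff group `H`, with the subspace
topology, has a subset `A` closed and discrete in `G` with `G = A * A⁻¹`. -/
theorem dense_countable_subgroup_of_compact_eq_mul_inv
    (H : Type*) [Group H] [TopologicalSpace H] [IsTopologicalGroup H]
    [CompactSpace H] [T2Space H]
    (G : Subgroup H) [Countable G] (hdense : Dense (G : Set H)) :
    ∃ A : Set G, IsClosed A ∧ DiscreteTopology A ∧ A * A⁻¹ = Set.univ := by
  classical
  cases finite_or_infinite H with
  | inl hfin =>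
    refine ⟨Set.univ, isClosed_univ, inferInstance, ?_⟩
    ext g
    simp only [Set.mem_univ, iff_true]
    exact ⟨g, trivial, 1, by simp, by simp⟩
  | inr hinf =>
    borelize H
    set μ := Measure.haarMeasure (⊤ : PositiveCompacts H) with hμdef
    have hμuniv : μ Set.univ = 1 := by
      have := Measure.haarMeasure_self (K₀ := (⊤ : PositiveCompacts H))
      rwa [PositiveCompacts.coe_top] at this
    -- the identity is not isolated
    haveI hNB : (𝓝[≠] (1 : H)).NeBot := by
      rw [Filter.neBot_iff]
      intro h
      have hempty : (∅ : Set H) ∈ 𝓝[≠] (1 : H) := h ▸ Filter.mem_bot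
      obtain ⟨U, hUo, hU1, hUsub⟩ := mem_nhdsWithin.1 hempty
      have hU : U = {1} := by
        apply subset_antisymm
        · intro y hy
          by_contra hy1
          exact hUsub ⟨hy, hy1⟩
        · simpa using hU1
      haveI := discreteTopology_of_isOpen_singleton_one (hU ▸ hUo)
      haveI : Finite H := finite_of_compact_of_discrete
      exact not_finite H
    haveI : NullSingletonClass μ := inferInstance
    -- enumerate G
    obtain ⟨e, he⟩ := exists_surjective_nat G
    -- small open neighborhoods
    have hU : ∀ n : ℕ, ∃ U : Set H, IsOpen U ∧ (e n : H) ∈ U ∧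
        μ (closure U) ≤ (2 : ℝ≥0∞)⁻¹ ^ (n + 3) := by
      intro n
      have hpos : (0 : ℝ≥0∞) < 2⁻¹ ^ (n + 3) := by
        apply ENNReal.pow_pos
        simp
      have h0 : μ {(e n : H)} < 2⁻¹ ^ (n + 3) := by
        rw [measure_singleton]; exact hpos
      obtain ⟨V, hV, hVo, hVμ⟩ := Set.exists_isOpen_lt_of_lt _ _ h0
      obtain ⟨W, hWn, hWc, hWV⟩ :=
        exists_mem_nhds_isClosed_subset (hVo.mem_nhds (hV (Set.mem_singleton _)))
      refine ⟨interior W, isOpen_interior, mem_interior_iff_mem_nhds.2 hWn, ?_⟩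
      have hsub : closure (interior W) ⊆ V :=
        (closure_mono interior_subset).trans (hWc.closure_subset.trans hWV)
      exact (measure_mono hsub).trans hVμ.le
    choose U hUopen hUmem hUμ using hU
    -- the union of closures up to n
    set C : ℕ → Set H := fun n => ⋃ i ∈ Finset.range (n + 1), closure (U i) with hCdef
    have hCclosed : ∀ n, IsClosed (C n) := fun n =>
      Set.Finite.isClosed_biUnion (Finset.finite_toSet _) fun i _ => isClosed_closure
    have hsum : ∀ n : ℕ, ∑ i ∈ Finset.range n, (2 : ℝ≥0∞)⁻¹ ^ (i + 3) + 2⁻¹ ^ (n + 2)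
        = 2⁻¹ ^ 2 := by
      intro n
      induction n with
      | zero => simp
      | succ n ih =>
        rw [Finset.sum_range_succ, add_assoc, ← ih]
        congr 1
        have : (2 : ℝ≥0∞)⁻¹ ^ (n + 3) + 2⁻¹ ^ (n + 1 + 2) = 2⁻¹ ^ (n + 2) := by
          rw [show n + 1 + 2 = n + 3 by ring, ← two_mul, pow_succ]
          rw [mul_comm ((2:ℝ≥0∞)⁻¹ ^ (n+2)) 2⁻¹, ← mul_assoc]
          rw [ENNReal.mul_inv_cancel (by norm_num) (by norm_num), one_mul]
        rw [this]
    have hCμ : ∀ n, μ (C n) ≤ 4⁻¹ := by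
      intro n
      refine (measure_biUnion_finset_le _ _).trans ?_
      have h1 : ∑ i ∈ Finset.range (n + 1), μ (closure (U i))
          ≤ ∑ i ∈ Finset.range (n + 1), (2 : ℝ≥0∞)⁻¹ ^ (i + 3) :=
        Finset.sum_le_sum fun i _ => hUμ i
      refine h1.trans ?_
      have := hsum (n + 1)
      have h2 : ∑ i ∈ Finset.range (n + 1), (2 : ℝ≥0∞)⁻¹ ^ (i + 3) ≤ 2⁻¹ ^ 2 :=
        this ▸ le_self_add
      refine h2.trans_eq ?_
      rw [show ((2 : ℝ≥0∞)⁻¹) ^ 2 = (2^2 : ℝ≥0∞)⁻¹ by rw [ENNReal.inv_pow]]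
      norm_num
    -- pick points of G avoiding C n and (e n) • C n
    have hpick : ∀ n : ℕ, ∃ x : H, x ∈ (G : Set H) ∧ x ∉ C n ∧ x ∉ (e n : H) • C n := by
      intro n
      have hclosed : IsClosed (C n ∪ (e n : H) • C n) :=
        (hCclosed n).union ((hCclosed n).smul (e n : H))
      have hlt : μ (C n ∪ (e n : H) • C n) < 1 := by
        refine (measure_union_le _ _).trans_lt ?_
        have hsm : μ ((e n : H) • C n) = μ (C n) := measure_smul μ ((e n : H)) (C n)
        rw [hsm]
        have h4 : (4 : ℝ≥0∞)⁻¹ + 4⁻¹ = 2⁻¹ := by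
          rw [← two_mul, show (4 : ℝ≥0∞) = 2 * 2 by norm_num,
            ENNReal.mul_inv (by norm_num) (by norm_num), ← mul_assoc,
            ENNReal.mul_inv_cancel (by norm_num) (by norm_num), one_mul]
        calc μ (C n) + μ (C n) ≤ 4⁻¹ + 4⁻¹ := add_le_add (hCμ n) (hCμ n)
          _ < 1 := by rw [h4]; exact ENNReal.inv_lt_one.2 one_lt_two
      have hne : ((C n ∪ (e n : H) • C n)ᶜ).Nonempty := by
        rw [Set.nonempty_compl]
        intro hEq
        rw [hEq, hμuniv] at hlt
        exact lt_irrefl _ hlt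
      obtain ⟨x, hxG, hx⟩ := hdense.exists_mem_open hclosed.isOpen_compl hne
      rw [Set.mem_compl_iff, Set.mem_union] at hx
      push_neg at hx
      exact ⟨x, hxG, hx.1, hx.2⟩
    choose x hxG hxC hxS using hpick
    set a : ℕ → G := fun n => ⟨x n, hxG n⟩ with hadef
    set b : ℕ → G := fun n => (e n)⁻¹ * a n with hbdef
    have hbC : ∀ n, (b n : H) ∉ C n := by
      intro n hb
      apply hxS n
      rw [Set.mem_smul_set_iff_inv_smul_mem]
      simpa [hbdef, smul_eq_mul] using hb
    set A : Set G := Set.range a ∪ Set.range b with hAdef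
    -- key: elements of A with large index avoid U n
    have hkey : ∀ n m : ℕ, n ≤ m → (a m : H) ∉ U n ∧ (b m : H) ∉ U n := by
      intro n m hnm
      have hsub : U n ⊆ C m := by
        intro y hy
        exact Set.mem_biUnion (Finset.mem_range.2 (Nat.lt_succ_of_le hnm)) (subset_closure hy)
      exact ⟨fun h => hxC m (hsub h), fun h => hbC m (hsub h)⟩
    have hloc : ∀ g : G, ∃ V ∈ nhds g, (A ∩ V).Finite := by
      intro g
      obtain ⟨n, rfl⟩ := he g
      refine ⟨(↑) ⁻¹' U n, ?_, ?_⟩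
      · exact ((hUopen n).preimage continuous_subtype_val).mem_nhds (hUmem n)
      · refine (((Set.finite_Iio n).image a).union ((Set.finite_Iio n).image b)).subset ?_
        rintro y ⟨hyA, hyV⟩
        rcases hyA with ⟨m, rfl⟩ | ⟨m, rfl⟩
        · left
          refine ⟨m, ?_, rfl⟩
          by_contra hmn
          exact (hkey n m (le_of_not_gt hmn)).1 hyV
        · right
          refine ⟨m, ?_, rfl⟩
          by_contra hmn
          exact (hkey n m (le_of_not_gt hmn)).2 hyV
    obtain ⟨hclosed, hdiscrete⟩ := aux_closed_discrete_of_locally_finite A hloc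
    refine ⟨A, hclosed, hdiscrete, ?_⟩
    ext g
    simp only [Set.mem_univ, iff_true]
    obtain ⟨n, rfl⟩ := he g
    refine ⟨a n, Or.inl ⟨n, rfl⟩, (b n)⁻¹, ?_, ?_⟩
    · rw [Set.mem_inv, inv_inv]
      exact Or.inr ⟨n, rfl⟩
    · rw [hbdef]
      group
end

section
/- Every countable Hausdorff topological group G is generated (as a group) by some closed discrete subset of G; that is, there is a closed discrete subset A of G whose generated subgroup is all of G. -/
open Set Metric UniformSpace Filter Uniformity Topology

section Aux

private def MCopy (G : Type u) : Type u := G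
private def mco {G : Type u} : G → MCopy G := fun g => g


theorem cantor_avoid {X : Type*} [MetricSpace X] [CompleteSpace X] [Nonempty X]
    (e : ℕ → X)
    (h2 : ∀ (x : X) (r : ℝ), 0 < r → ∀ z : X, ∃ p q : X,
      p ≠ q ∧ p ∈ ball x r ∧ q ∈ ball x r ∧ p ≠ z ∧ q ≠ z) :
    ∃ Φ : (ℕ → Bool) → X, Continuous Φ ∧ Function.Injective Φ ∧ ∀ σ k, Φ σ ≠ e k := by
  classical
  have step : ∀ (pr : X × ℝ), 0 < pr.2 → ∀ z : X, ∃ c : Bool → X × ℝ,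
      (∀ i, 0 < (c i).2) ∧ (∀ i, (c i).2 ≤ pr.2 / 2) ∧
      (∀ i, closedBall (c i).1 (c i).2 ⊆ ball pr.1 pr.2) ∧
      (∀ i, z ∉ closedBall (c i).1 (c i).2) ∧
      Disjoint (closedBall (c false).1 (c false).2) (closedBall (c true).1 (c true).2) := by
    rintro ⟨x, r⟩ hr z
    simp only at hr
    obtain ⟨p, q, hpq, hp, hq, hpz, hqz⟩ := h2 x r hr z
    rw [mem_ball] at hp hq
    set m : ℝ := min (min (r - dist p x) (r - dist q x))
      (min (dist p q / 3) (min (dist p z) (dist q z))) with hm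
    have hmpos : 0 < m := by
      have := dist_pos.2 hpq
      have := dist_pos.2 hpz
      have := dist_pos.2 hqz
      simp only [hm, lt_min_iff]
      exact ⟨⟨by linarith, by linarith⟩, by linarith, by linarith, by linarith⟩
    set ρ : ℝ := m / 2 with hρdef
    have hρpos : 0 < ρ := by positivity
    have hρm : ρ < m := by simp only [hρdef]; linarith
    have hm1 : m ≤ r - dist p x := (min_le_left _ _).trans (min_le_left _ _)
    have hm2 : m ≤ r - dist q x := (min_le_left _ _).trans (min_le_right _ _)
    have hm3 : m ≤ dist p q / 3 := (min_le_right _ _).trans (min_le_left _ _)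
    have hm4 : m ≤ dist p z := (min_le_right _ _).trans ((min_le_right _ _).trans (min_le_left _ _))
    have hm5 : m ≤ dist q z := (min_le_right _ _).trans ((min_le_right _ _).trans (min_le_right _ _))
    refine ⟨fun i => (cond i q p, ρ), ?_, ?_, ?_, ?_, ?_⟩
    · intro i; exact hρpos
    · intro i
      show ρ ≤ r / 2
      have h0 : dist p x ≥ 0 := dist_nonneg
      simp only [hρdef]; linarith
    · intro i y hy
      rw [mem_closedBall] at hy
      rw [mem_ball]
      cases i <;> simp only [cond] at hy ⊢
      · calc dist y x ≤ dist y p + dist p x := dist_triangle _ _ _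
          _ ≤ ρ + dist p x := by linarith
          _ < r := by linarith
      · calc dist y x ≤ dist y q + dist q x := dist_triangle _ _ _
          _ ≤ ρ + dist q x := by linarith
          _ < r := by linarith
    · intro i hzmem
      rw [mem_closedBall] at hzmem
      cases i <;> simp only [cond] at hzmem
      · rw [dist_comm] at hzmem; linarith
      · rw [dist_comm] at hzmem; linarith
    · rw [Set.disjoint_left]
      intro y hy hy'
      rw [mem_closedBall] at hy hy'
      simp only [cond] at hy hy'
      have hd : dist p q ≤ dist p y + dist y q := dist_triangle _ _ _
      rw [dist_comm] at hy
      have := dist_pos.2 hpq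
      linarith
  -- choice functions
  choose ch ch1 ch2 ch3 ch4 ch5 using step
  obtain ⟨x₀⟩ := ‹Nonempty X›
  -- nodes indexed by lists, head = deepest bit
  let F : List Bool → {pr : X × ℝ // 0 < pr.2} :=
    fun l => List.rec (motive := fun _ => {pr : X × ℝ // 0 < pr.2})
      ⟨(x₀, 1), one_pos⟩
      (fun i l ih => ⟨ch ih.1 ih.2 (e l.length) i, ch1 ih.1 ih.2 (e l.length) i⟩) l
  have Fcons : ∀ (i : Bool) (l : List Bool),
      (F (i :: l)).1 = ch (F l).1 (F l).2 (e l.length) i := fun i l => rfl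
  -- prefixes
  let pre : (ℕ → Bool) → ℕ → List Bool := fun σ n => (List.range n).reverse.map σ
  have pre_succ : ∀ σ n, pre σ (n + 1) = σ n :: pre σ n := by
    intro σ n
    simp only [pre, List.range_succ, List.reverse_append, List.reverse_cons, List.reverse_nil,
      List.nil_append, List.singleton_append, List.map_cons]
  have pre_len : ∀ σ n, (pre σ n).length = n := by
    intro σ n; simp [pre]
  have pre_eq_of_agree : ∀ σ τ : ℕ → Bool, ∀ n, (∀ i < n, σ i = τ i) → pre σ n = pre τ n := by
    intro σ τ n h
    induction n with
    | zero => rfl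
    | succ k ih =>
      rw [pre_succ, pre_succ, ih (fun i hi => h i (Nat.lt_succ_of_lt hi)),
        h k (Nat.lt_succ_self k)]
  -- basic properties of the scheme along prefixes
  have rad_le : ∀ σ n, (F (pre σ n)).1.2 ≤ (1 / 2) ^ n := by
    intro σ n
    induction n with
    | zero => simp [pre]; exact le_rfl
    | succ k ih =>
      rw [pre_succ]
      have h := ch2 (F (pre σ k)).1 (F (pre σ k)).2 (e (pre σ k).length) (σ k)
      rw [← Fcons] at h
      calc (F (σ k :: pre σ k)).1.2 ≤ (F (pre σ k)).1.2 / 2 := h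
        _ ≤ (1 / 2) ^ k / 2 := by linarith
        _ = (1 / 2) ^ (k + 1) := by ring
  have nest : ∀ σ n, closedBall (F (pre σ (n+1))).1.1 (F (pre σ (n+1))).1.2 ⊆
      closedBall (F (pre σ n)).1.1 (F (pre σ n)).1.2 := by
    intro σ n
    rw [pre_succ]
    have h := ch3 (F (pre σ n)).1 (F (pre σ n)).2 (e (pre σ n).length) (σ n)
    rw [← Fcons] at h
    exact h.trans ball_subset_closedBall
  have nest' : ∀ σ m n, m ≤ n → closedBall (F (pre σ n)).1.1 (F (pre σ n)).1.2 ⊆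
      closedBall (F (pre σ m)).1.1 (F (pre σ m)).1.2 := by
    intro σ m n h
    induction n with
    | zero => rw [Nat.le_zero.1 h]
    | succ k ih =>
      rcases Nat.lt_or_ge m (k+1) with h' | h'
      · exact (nest σ k).trans (ih (Nat.lt_succ_iff.1 h'))
      · rw [Nat.le_antisymm h h']
  -- the centers form a Cauchy sequence
  have center_mem : ∀ σ n, (F (pre σ n)).1.1 ∈
      closedBall (F (pre σ n)).1.1 (F (pre σ n)).1.2 :=
    fun σ n => mem_closedBall_self (le_of_lt (F (pre σ n)).2)
  have dist_succ : ∀ σ n, dist (F (pre σ n)).1.1 (F (pre σ (n+1))).1.1 ≤ (1/2)^n := by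
    intro σ n
    have h1 : (F (pre σ (n+1))).1.1 ∈ closedBall (F (pre σ n)).1.1 (F (pre σ n)).1.2 :=
      nest σ n (center_mem σ (n+1))
    rw [mem_closedBall] at h1
    rw [dist_comm]
    exact h1.trans (rad_le σ n)
  have cauchy : ∀ σ, CauchySeq (fun n => (F (pre σ n)).1.1) := by
    intro σ
    exact cauchySeq_of_le_geometric (1/2) 1 (by norm_num)
      (fun n => by simpa using dist_succ σ n)
  have limex : ∀ σ : ℕ → Bool, ∃ x : X, Filter.Tendsto (fun n => (F (pre σ n)).1.1)
      Filter.atTop (nhds x) := fun σ => cauchySeq_tendsto_of_complete (cauchy σ)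
  choose Φ hΦ using limex
  have Φmem : ∀ σ n, Φ σ ∈ closedBall (F (pre σ n)).1.1 (F (pre σ n)).1.2 := by
    intro σ n
    apply Metric.isClosed_closedBall.mem_of_tendsto (hΦ σ)
    filter_upwards [Filter.eventually_ge_atTop n] with k hk
    exact nest' σ n k hk (center_mem σ k)
  have Φdist : ∀ σ τ : ℕ → Bool, ∀ n, (∀ i < n, σ i = τ i) →
      dist (Φ σ) (Φ τ) ≤ 2 * (1/2)^n := by
    intro σ τ n hag
    have h1 := Φmem σ n
    have h2' := Φmem τ n
    rw [← pre_eq_of_agree σ τ n hag] at h2'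
    rw [mem_closedBall] at h1 h2'
    have hr := rad_le σ n
    calc dist (Φ σ) (Φ τ) ≤ dist (Φ σ) (F (pre σ n)).1.1 + dist (F (pre σ n)).1.1 (Φ τ) :=
          dist_triangle _ _ _
      _ ≤ (1/2)^n + (1/2)^n := by
          rw [dist_comm (F (pre σ n)).1.1 (Φ τ)]; exact add_le_add (h1.trans hr) (h2'.trans hr)
      _ = 2 * (1/2)^n := by ring
  refine ⟨Φ, ?_, ?_, ?_⟩
  · -- continuity
    rw [continuous_iff_continuousAt]
    intro σ
    rw [ContinuousAt, Metric.tendsto_nhds]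
    intro ε hε
    obtain ⟨n, hn⟩ := exists_pow_lt_of_lt_one (by positivity : (0:ℝ) < ε / 3)
      (by norm_num : (1:ℝ)/2 < 1)
    have hU : {τ : ℕ → Bool | ∀ i ∈ Finset.range n, τ i = σ i} ∈ nhds σ := by
      apply IsOpen.mem_nhds
      · have hrw : {τ : ℕ → Bool | ∀ i ∈ Finset.range n, τ i = σ i}
            = ⋂ i ∈ Finset.range n, {τ : ℕ → Bool | τ i = σ i} := by
          ext τ; simp
        rw [hrw]
        apply isOpen_biInter_finset
        intro i _
        have hpre : {τ : ℕ → Bool | τ i = σ i} = (fun τ : ℕ → Bool => τ i) ⁻¹' {σ i} := rfl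
        rw [hpre]
        exact (continuous_apply i).isOpen_preimage _ (isOpen_discrete _)
      · intro i _; rfl
    filter_upwards [hU] with τ hτ
    have := Φdist τ σ n (fun i hi => hτ i (Finset.mem_range.2 hi))
    have h23 : (2:ℝ) * (1/2)^n < 2 * (ε/3) := by
      have : (0:ℝ) < 2 := by norm_num
      exact (mul_lt_mul_iff_right₀ this).2 hn
    calc dist (Φ τ) (Φ σ) ≤ 2 * (1/2)^n := this
      _ < 2 * (ε/3) := h23
      _ < ε := by linarith
  · -- injectivity
    intro σ τ hst
    by_contra hne
    have hex : ∃ i, σ i ≠ τ i := by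
      by_contra hc
      push_neg at hc
      exact hne (funext hc)
    set n := Nat.find hex with hn
    have hdiff : σ n ≠ τ n := Nat.find_spec hex
    have hag : ∀ i < n, σ i = τ i := fun i hi => by
      by_contra hc; exact Nat.find_min hex hi hc
    have hpre : pre σ n = pre τ n := pre_eq_of_agree σ τ n hag
    have h1 : Φ σ ∈ closedBall (F (σ n :: pre σ n)).1.1 (F (σ n :: pre σ n)).1.2 := by
      have := Φmem σ (n+1); rwa [pre_succ] at this
    have h2' : Φ τ ∈ closedBall (F (τ n :: pre σ n)).1.1 (F (τ n :: pre σ n)).1.2 := by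
      have := Φmem τ (n+1); rwa [pre_succ, ← hpre] at this
    have hdisj := ch5 (F (pre σ n)).1 (F (pre σ n)).2 (e (pre σ n).length)
    rw [Fcons] at h1
    rw [Fcons] at h2'
    cases hσ : σ n with
    | false =>
      have hτn : τ n = true := by
        cases hτ : τ n
        · rw [hσ, hτ] at hdiff; exact absurd rfl hdiff
        · rfl
      rw [hσ] at h1; rw [hτn] at h2'
      rw [hst] at h1
      exact (Set.disjoint_left.1 hdisj h1) h2'
    | true =>
      have hτn : τ n = false := by
        cases hτ : τ n
        · rfl
        · rw [hσ, hτ] at hdiff; exact absurd rfl hdiff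
      rw [hσ] at h1; rw [hτn] at h2'
      rw [hst] at h1
      exact (Set.disjoint_left.1 hdisj h2') h1
  · -- avoids e
    intro σ k h
    have h1 := Φmem σ (k+1)
    rw [h] at h1
    have h2' := ch4 (F (pre σ k)).1 (F (pre σ k)).2 (e (pre σ k).length) (σ k)
    rw [← Fcons, ← pre_succ] at h2'
    rw [pre_len] at h2'
    exact h2' h1


/-- Every countable Hausdorff topological group is generated by some closed discrete
subset. -/
theorem countable_group_generated_by_closed_discrete
    (G : Type*) [Group G] [TopologicalSpace G] [IsTopologicalGroup G]
    [T2Space G] [Countable G] :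
    ∃ A : Set G, IsClosed A ∧ DiscreteTopology A ∧ Subgroup.closure A = ⊤ := by
  classical
  by_cases hdisc : IsOpen ({1} : Set G)
  · haveI : DiscreteTopology G := discreteTopology_of_isOpen_singleton_one hdisc
    exact ⟨Set.univ, isClosed_univ, inferInstance, Subgroup.closure_univ⟩
  · obtain ⟨h, hsurj⟩ := exists_surjective_nat G
    -- Step 1 : a decreasing chain of symmetric open neighborhoods of 1
    have step : ∀ (U : Set G), IsOpen U → (1:G) ∈ U → ∀ g : G, ∃ W : Set G,
        IsOpen W ∧ (1:G) ∈ W ∧ (∀ x ∈ W, x⁻¹ ∈ W) ∧ (∀ x ∈ W, ∀ y ∈ W, x * y ∈ U)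
        ∧ W ⊆ U ∧ (g ≠ 1 → g ∉ W) := by
      intro U hUo hU1 g
      obtain ⟨V1, hV1o, hV11, hV1m⟩ := exists_open_nhds_one_mul_subset (hUo.mem_nhds hU1)
      by_cases hg : g = 1
      · refine ⟨V1 ∩ {x | x⁻¹ ∈ V1}, ?_, ?_, ?_, ?_, ?_, ?_⟩
        · exact hV1o.inter (hV1o.preimage continuous_inv)
        · simp [hV11]
        · rintro x ⟨hx1, hx2⟩; exact ⟨hx2, by simpa using hx1⟩
        · rintro x ⟨hx1, _⟩ y ⟨hy1, _⟩; exact hV1m (Set.mul_mem_mul hx1 hy1)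
        · rintro x ⟨hx1, _⟩
          have := hV1m (Set.mul_mem_mul hx1 hV11); simpa using this
        · intro hgg; exact absurd hg hgg
      · refine ⟨V1 ∩ {x | x⁻¹ ∈ V1} ∩ ({g}ᶜ ∩ {g⁻¹}ᶜ), ?_, ?_, ?_, ?_, ?_, ?_⟩
        · exact ((hV1o.inter (hV1o.preimage continuous_inv)).inter
            ((isClosed_singleton.isOpen_compl).inter isClosed_singleton.isOpen_compl))
        · refine ⟨⟨hV11, by simpa using hV11⟩, ?_, ?_⟩
          · simpa using (Ne.symm hg)
          · simp only [mem_compl_iff, mem_singleton_iff]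
            intro hc
            exact hg (by simpa using congrArg (·⁻¹) hc.symm)
        · rintro x ⟨⟨hx1, hx2⟩, hx3, hx4⟩
          refine ⟨⟨hx2, by simpa using hx1⟩, ?_, ?_⟩
          · simp only [mem_compl_iff, mem_singleton_iff] at hx4 ⊢
            intro hc; exact hx4 (by simpa using congrArg (·⁻¹) hc)
          · simp only [mem_compl_iff, mem_singleton_iff] at hx3 ⊢
            intro hc; exact hx3 (by simpa using congrArg (·⁻¹) hc)
        · rintro x ⟨⟨hx1, _⟩, _⟩ y ⟨⟨hy1, _⟩, _⟩; exact hV1m (Set.mul_mem_mul hx1 hy1)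
        · rintro x ⟨⟨hx1, _⟩, _⟩
          have := hV1m (Set.mul_mem_mul hx1 hV11); simpa using this
        · exact fun _ hmem => hmem.2.1 rfl
    let Vrec : ℕ → {W : Set G // IsOpen W ∧ (1:G) ∈ W ∧ (∀ x ∈ W, x⁻¹ ∈ W)} :=
      fun n => Nat.rec ⟨Set.univ, isOpen_univ, mem_univ _, fun x _ => mem_univ _⟩
        (fun n ih => ⟨Classical.choose (step ih.1 ih.2.1 ih.2.2.1 (h n)),
          (Classical.choose_spec (step ih.1 ih.2.1 ih.2.2.1 (h n))).1,
          (Classical.choose_spec (step ih.1 ih.2.1 ih.2.2.1 (h n))).2.1,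
          (Classical.choose_spec (step ih.1 ih.2.1 ih.2.2.1 (h n))).2.2.1⟩) n
    let V : ℕ → Set G := fun n => (Vrec n).1
    have Vopen : ∀ n, IsOpen (V n) := fun n => (Vrec n).2.1
    have V1mem : ∀ n, (1:G) ∈ V n := fun n => (Vrec n).2.2.1
    have Vsym : ∀ n, ∀ x ∈ V n, x⁻¹ ∈ V n := fun n => (Vrec n).2.2.2
    have Vspec : ∀ n, (∀ x ∈ V (n+1), ∀ y ∈ V (n+1), x*y ∈ V n) ∧ V (n+1) ⊆ V n
        ∧ (h n ≠ 1 → h n ∉ V (n+1)) := by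
      intro n
      have hs := Classical.choose_spec (step (Vrec n).1 (Vrec n).2.1 (Vrec n).2.2.1 (h n))
      exact ⟨hs.2.2.2.1, hs.2.2.2.2.1, hs.2.2.2.2.2⟩
    have Vmul : ∀ n, ∀ x ∈ V (n+1), ∀ y ∈ V (n+1), x*y ∈ V n := fun n => (Vspec n).1
    have Vanti : ∀ m n, m ≤ n → V n ⊆ V m := by
      intro m n hmn
      induction n with
      | zero => rw [Nat.le_zero.1 hmn]
      | succ k ih =>
        rcases Nat.lt_or_ge m (k+1) with h' | h'
        · exact ((Vspec k).2.1).trans (ih (Nat.lt_succ_iff.1 h'))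
        · rw [Nat.le_antisymm hmn h']
    have Vsep : ∀ g : G, g ≠ 1 → ∃ n, g ∉ V n := by
      intro g hg
      obtain ⟨j, hj⟩ := hsurj g
      exact ⟨j + 1, by rw [← hj] at hg ⊢; exact (Vspec j).2.2 hg⟩
    have Vnontriv : ∀ n, ∃ v ∈ V n, v ≠ (1:G) := by
      intro n
      by_contra hc
      push_neg at hc
      apply hdisc
      have : V n = {1} := by
        apply Set.eq_singleton_iff_unique_mem.2
        exact ⟨V1mem n, fun x hx => hc x hx⟩
      rw [← this]; exact Vopen n
    -- Step 2 : the (left) uniformity generated by the chain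
    let E : ℕ → Set (G × G) := fun n => {p : G × G | p.1⁻¹ * p.2 ∈ V n}
    have Eanti : ∀ m n, m ≤ n → E n ⊆ E m := fun m n hmn p hp => Vanti m n hmn hp
    have hdir : Directed (· ≥ ·) E := by
      intro m n
      exact ⟨max m n, Eanti m _ (le_max_left _ _), Eanti n _ (le_max_right _ _)⟩
    let U0 : Filter (G × G) := ⨅ n, Filter.principal (E n)
    have hbasis : U0.HasBasis (fun _ => True) E := Filter.hasBasis_iInf_principal hdir
    have hEmem : ∀ n, E n ∈ U0 := fun n => hbasis.mem_of_mem trivial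
    let core : UniformSpace.Core G := UniformSpace.Core.mk' U0
      (by
        intro r hr x
        obtain ⟨n, -, hn⟩ := hbasis.mem_iff.1 hr
        exact hn (by simp [E, V1mem n]))
      (by
        intro r hr
        obtain ⟨n, -, hn⟩ := hbasis.mem_iff.1 hr
        refine Filter.mem_of_superset (hEmem n) ?_
        intro p hp
        apply hn
        show (p.2)⁻¹ * p.1 ∈ V n
        have : ((p.1)⁻¹ * p.2)⁻¹ ∈ V n := Vsym n _ hp
        simpa [mul_inv_rev] using this)
      (by
        intro r hr
        obtain ⟨n, -, hn⟩ := hbasis.mem_iff.1 hr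
        refine ⟨E (n+1), hEmem (n+1), ?_⟩
        rintro ⟨x, z⟩ ⟨y, hxy, hyz⟩
        apply hn
        show x⁻¹ * z ∈ V n
        have : (x⁻¹ * y) * (y⁻¹ * z) ∈ V n := Vmul n _ hxy _ hyz
        simpa [mul_assoc] using this)
    let U' : UniformSpace G := UniformSpace.ofCore core
    -- Step 3 : metrization of a copy of G with this uniformity
    have hcg : @Filter.IsCountablyGenerated (MCopy G × MCopy G)
        (@uniformity (MCopy G) (show UniformSpace (MCopy G) from U')) :=
      hbasis.isCountablyGenerated
    obtain ⟨pm, hpm⟩ := @UniformSpace.metrizable_uniformity (MCopy G)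
      (show UniformSpace (MCopy G) from U') hcg
    letI : PseudoMetricSpace (MCopy G) := pm
    have hUeq : (𝓤 (MCopy G)) = (show UniformSpace (MCopy G) from U').uniformity := by
      have := congrArg (@UniformSpace.uniformity (MCopy G)) hpm
      exact this
    have hUbasis : (𝓤 (MCopy G)).HasBasis (fun _ => True)
        (fun n => (E n : Set (MCopy G × MCopy G))) := by
      rw [hUeq]; exact hbasis
    letI : T0Space (MCopy G) := by
      constructor
      intro x y hxy
      have hd : dist x y = 0 := (Metric.inseparable_iff).1 hxy
      have hmem : ∀ n, (x, y) ∈ (E n : Set (MCopy G × MCopy G)) := by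
        intro n
        have hEn : (E n : Set (MCopy G × MCopy G)) ∈ 𝓤 (MCopy G) :=
          hUbasis.mem_of_mem trivial
        obtain ⟨ε, hε, hsub⟩ := Metric.mem_uniformity_dist.1 hEn
        exact hsub (by rw [hd]; exact hε)
      by_contra hne
      have hx : (show G from x)⁻¹ * (show G from y) ≠ 1 := by
        intro hc
        have hxy' : (show G from x) = (show G from y) := inv_mul_eq_one.mp hc
        exact hne hxy'
      obtain ⟨n, hn⟩ := Vsep _ hx
      exact hn (hmem n)
    -- Step 4 : the completion and basic facts
    let ι : G → Completion (MCopy G) := fun g => ((mco g : MCopy G) : Completion (MCopy G))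
    have hι_dist : ∀ x y : G, dist (ι x) (ι y) = dist (mco x) (mco y) :=
      fun x y => Completion.dist_eq (mco x) (mco y)
    have hsmall : ∀ ε : ℝ, 0 < ε → ∃ n, ∀ x y : G, x⁻¹ * y ∈ V n →
        dist (ι x) (ι y) < ε := by
      intro ε hε
      have hmem : {p : MCopy G × MCopy G | dist p.1 p.2 < ε} ∈ 𝓤 (MCopy G) :=
        dist_mem_uniformity hε
      obtain ⟨n, -, hn⟩ := hUbasis.mem_iff.1 hmem
      refine ⟨n, fun x y hxy => ?_⟩
      rw [hι_dist]
      exact hn (show ((mco x, mco y) : MCopy G × MCopy G) ∈ E n from hxy)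
    have hι_inj : Function.Injective ι := by
      intro x y hxy
      exact Completion.coe_injective (MCopy G) hxy
    have hι_dense : DenseRange ι := by
      have h1 : DenseRange ((↑) : MCopy G → Completion (MCopy G)) :=
        Completion.denseRange_coe
      have h2 : Set.range ι = Set.range ((↑) : MCopy G → Completion (MCopy G)) := by
        ext z
        constructor
        · rintro ⟨g, rfl⟩; exact ⟨mco g, rfl⟩
        · rintro ⟨m, rfl⟩; exact ⟨(show G from m), rfl⟩
      unfold DenseRange
      rw [h2]
      exact h1
    -- Step 5 : every ball contains two points different from a given point
    have hthree : ∀ (x : Completion (MCopy G)) (r : ℝ), 0 < r →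
        ∀ z : Completion (MCopy G), ∃ p q, p ≠ q ∧ p ∈ ball x r ∧ q ∈ ball x r ∧
          p ≠ z ∧ q ≠ z := by
      intro x r hr z
      obtain ⟨g, hgd⟩ := hι_dense.exists_dist_lt x (by positivity : (0:ℝ) < r/2)
      obtain ⟨n₀, hn₀⟩ := hsmall (r/2) (by positivity)
      obtain ⟨v, hv, hv1⟩ := Vnontriv n₀
      obtain ⟨mv, hmv⟩ := Vsep v hv1
      obtain ⟨w, hw, hw1⟩ := Vnontriv (max n₀ mv)
      have hwv : w ≠ v := by
        intro hc
        exact hmv (hc ▸ Vanti mv (max n₀ mv) (le_max_right _ _) hw)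
      have hwn₀ : w ∈ V n₀ := Vanti n₀ (max n₀ mv) (le_max_left _ _) hw
      have hd1 : dist (ι g) (ι (g * v)) < r/2 := by
        apply hn₀
        simpa [mul_assoc] using hv
      have hd2 : dist (ι g) (ι (g * w)) < r/2 := by
        apply hn₀
        simpa [mul_assoc] using hwn₀
      have hb1 : ι g ∈ ball x r := by
        rw [mem_ball, dist_comm]
        linarith
      have hb2 : ι (g * v) ∈ ball x r := by
        rw [mem_ball, dist_comm]
        calc dist x (ι (g*v)) ≤ dist x (ι g) + dist (ι g) (ι (g*v)) := dist_triangle _ _ _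
          _ < r := by linarith
      have hb3 : ι (g * w) ∈ ball x r := by
        rw [mem_ball, dist_comm]
        calc dist x (ι (g*w)) ≤ dist x (ι g) + dist (ι g) (ι (g*w)) := dist_triangle _ _ _
          _ < r := by linarith
      have hne1 : ι g ≠ ι (g * v) := by
        intro hc
        exact hv1 (left_eq_mul.1 (hι_inj hc))
      have hne2 : ι g ≠ ι (g * w) := by
        intro hc
        have := hι_inj hc
        exact hw1 (left_eq_mul.1 this)
      have hne3 : ι (g * v) ≠ ι (g * w) := by
        intro hc
        exact hwv (mul_left_cancel (hι_inj hc)).symm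
      by_cases hz1 : z = ι g
      · exact ⟨ι (g*v), ι (g*w), hne3, hb2, hb3,
          by rw [hz1]; exact hne1.symm, by rw [hz1]; exact hne2.symm⟩
      · by_cases hz2 : z = ι (g*v)
        · exact ⟨ι g, ι (g*w), hne2, hb1, hb3,
            fun hc => hz1 hc.symm, by rw [hz2]; exact hne3.symm⟩
        · exact ⟨ι g, ι (g*v), hne1, hb1, hb2,
            fun hc => hz1 hc.symm, fun hc => hz2 hc.symm⟩
    -- Step 6 : a Cantor family avoiding the image of G
    haveI : Nonempty (MCopy G) := ⟨mco 1⟩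
    haveI : Nonempty (Completion (MCopy G)) := ⟨ι 1⟩
    obtain ⟨Φ, hΦc, hΦi, hΦa⟩ := cantor_avoid (fun k => ι (h k)) hthree
    -- Step 7 : separation moduli of Φ
    have hδex : ∀ L : ℕ, ∃ d : ℝ, 0 < d ∧ ∀ s t : ℕ → Bool,
        (∃ i < L, s i ≠ t i) → d ≤ dist (Φ s) (Φ t) := by
      intro L
      by_cases hL : ∃ p : (ℕ → Bool) × (ℕ → Bool), ∃ i < L, p.1 i ≠ p.2 i
      · set K : Set ((ℕ → Bool) × (ℕ → Bool)) := {p | ∃ i < L, p.1 i ≠ p.2 i} with hK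
        have hKne : K.Nonempty := hL
        have hKclosed : IsClosed K := by
          have hrw : K = ⋃ i ∈ Finset.range L,
              {p : (ℕ → Bool) × (ℕ → Bool) | p.1 i ≠ p.2 i} := by
            ext p; simp [hK]
          rw [hrw]
          apply Set.Finite.isClosed_biUnion (Finset.finite_toSet _)
          intro i _
          have hrw2 : {p : (ℕ → Bool) × (ℕ → Bool) | p.1 i ≠ p.2 i}
              = (fun p : (ℕ → Bool) × (ℕ → Bool) => (p.1 i, p.2 i)) ⁻¹'
                {q : Bool × Bool | q.1 ≠ q.2} := rfl
          rw [hrw2]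
          apply IsClosed.preimage
          · exact ((continuous_apply i).comp continuous_fst).prodMk
              ((continuous_apply i).comp continuous_snd)
          · exact isClosed_discrete _
        obtain ⟨p₀, hp₀K, hp₀min⟩ := hKclosed.isCompact.exists_isMinOn hKne
          ((continuous_dist.comp ((hΦc.comp continuous_fst).prodMk
            (hΦc.comp continuous_snd))).continuousOn)
        refine ⟨dist (Φ p₀.1) (Φ p₀.2), ?_, ?_⟩
        · rw [dist_pos]
          intro hc
          obtain ⟨i, -, hi⟩ := hp₀K
          exact hi (congrFun (hΦi hc) i)
        · intro s t hst
          exact hp₀min (show (s,t) ∈ K from hst)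
      · refine ⟨1, one_pos, fun s t hst => absurd ⟨(s,t), hst⟩ hL⟩
    choose δ hδpos hδsep using hδex
    -- Step 8 : neighborhoods W with controlled completion-diameter of translates
    have hselex : ∀ k : ℕ, ∃ n : ℕ, ∀ x y : G, x⁻¹ * y ∈ V n →
        dist (ι x) (ι y) < δ (2*k+3) / 2 :=
      fun k => hsmall _ (half_pos (hδpos _))
    choose nk hnk using hselex
    let W : ℕ → Set G := fun k => V (nk k + 1) ∩ (fun x : G => x⁻¹) ⁻¹' V (nk k + 1)
    have Wopen : ∀ k, IsOpen (W k) := by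
      intro k
      show IsOpen (V (nk k + 1) ∩ (fun x : G => x⁻¹) ⁻¹' V (nk k + 1))
      exact (Vopen (nk k + 1)).inter ((Vopen (nk k + 1)).preimage continuous_inv)
    have W1 : ∀ k, (1:G) ∈ W k := by
      intro k
      refine ⟨V1mem (nk k + 1), ?_⟩
      show (1:G)⁻¹ ∈ V (nk k + 1)
      simpa using V1mem (nk k + 1)
    have Wsym : ∀ k, ∀ x ∈ W k, x⁻¹ ∈ W k := fun k x hx => ⟨hx.2, by simpa using hx.1⟩
    have Wsmall : ∀ (k : ℕ) (c : G), ∀ x ∈ W k, ∀ y ∈ W k,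
        dist (ι (c * x)) (ι (c * y)) < δ (2*k+3) / 2 := by
      intro k c x hx y hy
      apply hnk
      have hxy : (c*x)⁻¹ * (c*y) = x⁻¹ * y := by group
      rw [hxy]
      exact Vmul _ _ hx.2 _ hy.1
    have hdiam : ∀ (k : ℕ) (c : G), ∀ z w : Completion (MCopy G),
        z ∈ closure (ι '' {y | ∃ w' ∈ W k, y = c * w'}) →
        w ∈ closure (ι '' {y | ∃ w' ∈ W k, y = c * w'}) →
        dist z w ≤ δ (2*k+3) / 2 := by
      intro k c z w hz hw
      have hdclosed : IsClosed {p : Completion (MCopy G) × Completion (MCopy G) |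
          dist p.1 p.2 ≤ δ (2*k+3) / 2} :=
        isClosed_le continuous_dist continuous_const
      have hsub : (ι '' {y | ∃ w' ∈ W k, y = c * w'}) ×ˢ
          (ι '' {y | ∃ w' ∈ W k, y = c * w'}) ⊆
          {p : Completion (MCopy G) × Completion (MCopy G) |
            dist p.1 p.2 ≤ δ (2*k+3) / 2} := by
        rintro ⟨z', w'⟩ ⟨⟨y1, ⟨w1, hw1, rfl⟩, rfl⟩, ⟨y2, ⟨w2, hw2, rfl⟩, rfl⟩⟩
        exact le_of_lt (Wsmall k c w1 hw1 w2 hw2)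
      have hmem : (z, w) ∈ closure ((ι '' {y | ∃ w' ∈ W k, y = c * w'}) ×ˢ
          (ι '' {y | ∃ w' ∈ W k, y = c * w'})) := by
        rw [closure_prod_eq]
        exact ⟨hz, hw⟩
      exact closure_minimal hsub hdclosed hmem
    -- Step 9 : choice of the generators
    have escape : ∀ m : ℕ, ∃ g : G, ∀ k, k < m →
        (¬ ∃ w ∈ W k, g = h k * w) ∧ (¬ ∃ w ∈ W k, g⁻¹ * h m = w * h k) := by
      intro m
      let T1 : ℕ → Set (Completion (MCopy G)) :=
        fun k => closure (ι '' {y | ∃ w' ∈ W k, y = h k * w'})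
      let T2 : ℕ → Set (Completion (MCopy G)) :=
        fun k => closure (ι '' {y | ∃ w' ∈ W k, y = (h m * (h k)⁻¹) * w'})
      let Q : ℕ → Set (Completion (MCopy G)) := fun i =>
        if i % 2 = 1 then T1 (i/2) else T2 (i/2 - 1)
      have hQ1 : ∀ k, Q (2*k+1) = T1 k := by
        intro k
        have h1 : (2*k+1) % 2 = 1 := by omega
        have h2 : (2*k+1) / 2 = k := by omega
        simp only [Q, h1, h2, if_pos]
      have hQ2 : ∀ k, Q (2*k+2) = T2 k := by
        intro k
        have h1 : ¬ ((2*k+2) % 2 = 1) := by omega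
        have h2 : (2*k+2) / 2 - 1 = k := by omega
        simp only [Q, h2, if_neg h1]
      let σ : ℕ → Bool := fun i =>
        if hne : ∃ s : ℕ → Bool, Φ s ∈ Q i then !(Classical.choose hne i) else false
      -- the avoidance property
      have havoid1 : ∀ k, Φ σ ∉ T1 k := by
        intro k hin
        have hin' : Φ σ ∈ Q (2*k+1) := (hQ1 k).symm.subset hin
        have hne : ∃ s : ℕ → Bool, Φ s ∈ Q (2*k+1) := ⟨σ, hin'⟩
        have hs₀ : Φ (Classical.choose hne) ∈ T1 k :=
          (hQ1 k).subset (Classical.choose_spec hne)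
        have hd : dist (Φ σ) (Φ (Classical.choose hne)) ≤ δ (2*k+3) / 2 :=
          hdiam k (h k) _ _ hin hs₀
        have hagree : ∀ j, j < 2*k+3 → σ j = Classical.choose hne j := by
          by_contra hc
          push_neg at hc
          obtain ⟨j, hj, hnej⟩ := hc
          have := hδsep (2*k+3) σ (Classical.choose hne) ⟨j, hj, hnej⟩
          have hp := hδpos (2*k+3)
          linarith
        have h1 := hagree (2*k+1) (by omega)
        have h2 : σ (2*k+1) = !(Classical.choose hne (2*k+1)) := by
          simp only [σ, dif_pos hne]
        rw [h1] at h2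
        simp at h2
      have havoid2 : ∀ k, Φ σ ∉ T2 k := by
        intro k hin
        have hin' : Φ σ ∈ Q (2*k+2) := (hQ2 k).symm.subset hin
        have hne : ∃ s : ℕ → Bool, Φ s ∈ Q (2*k+2) := ⟨σ, hin'⟩
        have hs₀ : Φ (Classical.choose hne) ∈ T2 k :=
          (hQ2 k).subset (Classical.choose_spec hne)
        have hd : dist (Φ σ) (Φ (Classical.choose hne)) ≤ δ (2*k+3) / 2 :=
          hdiam k (h m * (h k)⁻¹) _ _ hin hs₀
        have hagree : ∀ j, j < 2*k+3 → σ j = Classical.choose hne j := by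
          by_contra hc
          push_neg at hc
          obtain ⟨j, hj, hnej⟩ := hc
          have := hδsep (2*k+3) σ (Classical.choose hne) ⟨j, hj, hnej⟩
          have hp := hδpos (2*k+3)
          linarith
        have h1 := hagree (2*k+2) (by omega)
        have h2 : σ (2*k+2) = !(Classical.choose hne (2*k+2)) := by
          simp only [σ, dif_pos hne]
        rw [h1] at h2
        simp at h2
      -- find a nearby group element
      have hclosedU : IsClosed (⋃ k ∈ Finset.range m, T1 k ∪ T2 k) := by
        apply Set.Finite.isClosed_biUnion (Finset.finite_toSet _)
        intro k _
        exact isClosed_closure.union isClosed_closure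
      have hxnot : Φ σ ∈ (⋃ k ∈ Finset.range m, T1 k ∪ T2 k)ᶜ := by
        simp only [mem_compl_iff, mem_iUnion, not_exists]
        intro k _ hk
        rcases hk with hk | hk
        · exact havoid1 k hk
        · exact havoid2 k hk
      obtain ⟨ε, hε, hball⟩ := Metric.isOpen_iff.1 hclosedU.isOpen_compl (Φ σ) hxnot
      obtain ⟨g, hg⟩ := hι_dense.exists_dist_lt (Φ σ) hε
      have hgball : ι g ∈ (⋃ k ∈ Finset.range m, T1 k ∪ T2 k)ᶜ := by
        apply hball
        rw [mem_ball, dist_comm]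
        exact hg
      refine ⟨g, fun k hk => ⟨?_, ?_⟩⟩
      · rintro ⟨w, hw, hgw⟩
        apply hgball
        simp only [mem_iUnion]
        exact ⟨k, Finset.mem_range.2 hk, Or.inl (subset_closure ⟨g, ⟨w, hw, hgw⟩, rfl⟩)⟩
      · rintro ⟨w, hw, heq⟩
        have hgform : g = (h m * (h k)⁻¹) * w⁻¹ := by
          have h1 : g⁻¹ = w * h k * (h m)⁻¹ := by
            rw [← heq]; group
          calc g = (g⁻¹)⁻¹ := (inv_inv g).symm
            _ = (w * h k * (h m)⁻¹)⁻¹ := by rw [h1]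
            _ = (h m * (h k)⁻¹) * w⁻¹ := by group
        apply hgball
        simp only [mem_iUnion]
        exact ⟨k, Finset.mem_range.2 hk,
          Or.inr (subset_closure ⟨g, ⟨w⁻¹, Wsym k w hw, hgform⟩, rfl⟩)⟩
    choose a ha using escape
    let b : ℕ → G := fun m => (a m)⁻¹ * h m
    -- Step 10 : certificates of closedness and discreteness
    have cert : ∀ k : ℕ, ∃ U : Set G, IsOpen U ∧ h k ∈ U ∧
        ∀ y, y ∈ U → y ∈ Set.range a ∪ Set.range b → y = h k := by
      intro k
      let D : Set G := (((fun j : Fin (k+1) => a j) '' Set.univ) ∪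
        ((fun j : Fin (k+1) => b j) '' Set.univ)) \ {h k}
      have hDfin : D.Finite :=
        ((Set.finite_univ.image _).union (Set.finite_univ.image _)).diff
      have hDclosed : IsClosed D := hDfin.isClosed
      refine ⟨((((h k) * ·) '' W k) ∩ ((· * (h k)) '' W k)) \ D, ?_, ?_, ?_⟩
      · apply IsOpen.sdiff _ hDclosed
        exact ((isOpenMap_mul_left (h k)) _ (Wopen k)).inter
          ((isOpenMap_mul_right (h k)) _ (Wopen k))
      · refine ⟨⟨⟨1, W1 k, mul_one _⟩, ⟨1, W1 k, one_mul _⟩⟩, ?_⟩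
        intro hD
        exact hD.2 rfl
      · rintro y ⟨⟨⟨w1, hw1, hyw1⟩, ⟨w2, hw2, hyw2⟩⟩, hyD⟩ hyA
        by_cases hyh : y = h k
        · exact hyh
        rcases hyA with ⟨j, rfl⟩ | ⟨j, rfl⟩
        · rcases Nat.lt_or_ge k j with hj | hj
          · exact absurd ⟨w1, hw1, hyw1.symm⟩ ((ha j k hj).1)
          · exact absurd ⟨Or.inl ⟨⟨j, by omega⟩, mem_univ _, rfl⟩, hyh⟩ (fun hD => hyD hD)
        · rcases Nat.lt_or_ge k j with hj | hj
          · refine absurd ?_ ((ha j k hj).2)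
            exact ⟨w2, hw2, hyw2.symm⟩
          · exact absurd ⟨Or.inr ⟨⟨j, by omega⟩, mem_univ _, rfl⟩, hyh⟩ (fun hD => hyD hD)
    -- Step 11 : conclusion
    refine ⟨Set.range a ∪ Set.range b, ?_, ?_, ?_⟩
    · -- closed
      rw [← isOpen_compl_iff]
      apply isOpen_iff_forall_mem_open.2
      intro x hx
      obtain ⟨k, rfl⟩ := hsurj x
      obtain ⟨U, hUo, hUm, hUc⟩ := cert k
      refine ⟨U, ?_, hUo, hUm⟩
      intro y hy hyA
      exact hx (hUc y hy hyA ▸ hyA)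
    · -- discrete
      rw [discreteTopology_iff_isOpen_singleton]
      rintro ⟨x, hx⟩
      obtain ⟨k, rfl⟩ := hsurj x
      obtain ⟨U, hUo, hUm, hUc⟩ := cert k
      have hrw : ({⟨h k, hx⟩} : Set (Set.range a ∪ Set.range b : Set G)) =
          Subtype.val ⁻¹' U := by
        ext ⟨y, hy⟩
        simp only [Set.mem_singleton_iff, Set.mem_preimage, Subtype.mk.injEq]
        constructor
        · rintro rfl; exact hUm
        · intro hyU
          exact hUc y hyU hy
      rw [hrw]
      exact hUo.preimage continuous_subtype_val
    · -- generates
      rw [Subgroup.eq_top_iff']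
      intro g
      obtain ⟨m, rfl⟩ := hsurj g
      have hfact : h m = a m * b m := by
        show h m = a m * ((a m)⁻¹ * h m)
        group
      rw [hfact]
      exact Subgroup.mul_mem _
        (Subgroup.subset_closure (Or.inl ⟨m, rfl⟩))
        (Subgroup.subset_closure (Or.inr ⟨m, rfl⟩))

end Aux
end

section
/- Every countable Hausdorff topological group G has a subset A that is closed, discrete, and thin, such that G = AA⁻¹. -/
open Pointwise Set

namespace CountableThinAux


variable {G : Type*} [Group G]

/-- Minimal number of left translates of `V` needed to cover `S` (0 if impossible). -/
noncomputable def covN (S V : Set G) : ℕ :=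
  sInf {k | ∃ T : Finset G, T.card = k ∧ S ⊆ ↑T * V}

lemma covN_le {S V : Set G} {T : Finset G} (h : S ⊆ ↑T * V) : covN S V ≤ T.card :=
  Nat.sInf_le ⟨T, rfl, h⟩

lemma covN_exists {S V : Set G} (h : ∃ T : Finset G, S ⊆ ↑T * V) :
    ∃ T : Finset G, T.card = covN S V ∧ S ⊆ ↑T * V := by
  have hne : {k | ∃ T : Finset G, T.card = k ∧ S ⊆ ↑T * V}.Nonempty := by
    obtain ⟨T, hT⟩ := h
    exact ⟨T.card, T, rfl, hT⟩
  exact Nat.sInf_mem hne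

lemma cover_smul [DecidableEq G] {S V : Set G} {T : Finset G} (g : G) (h : S ⊆ ↑T * V) :
    g • S ⊆ ↑(g • T) * V := by
  rintro x ⟨s, hs, rfl⟩
  obtain ⟨t, ht, v, hv, rfl⟩ := h hs
  refine ⟨g * t, ?_, v, hv, by simp [smul_eq_mul, mul_assoc]⟩
  have : g * t ∈ g • T := Finset.smul_mem_smul_finset ht
  exact_mod_cast this

lemma covN_smul (g : G) (S V : Set G) : covN (g • S) V = covN S V := by
  classical
  unfold covN
  congr 1
  ext k
  constructor
  · rintro ⟨T, rfl, hT⟩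
    refine ⟨g⁻¹ • T, by rw [Finset.card_smul_finset], ?_⟩
    have := cover_smul g⁻¹ hT
    rwa [inv_smul_smul] at this
  · rintro ⟨T, rfl, hT⟩
    exact ⟨g • T, by rw [Finset.card_smul_finset], cover_smul g hT⟩

/-- Key packing estimate: if there are `m` pairwise disjoint translates of `V*V*V*V`, then any
cover of the whole group by translates of `W ⊆ V` (with `W` symmetric) needs at least
`m * covN V W` translates. -/
lemma packing {V W : Set G} (h1V : (1:G) ∈ V) (hWV : W ⊆ V) (hWsym : W⁻¹ = W)
    {m : ℕ} {t : ℕ → G}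
    (hdisj : ∀ k, k < m → ∀ l, l < m → k ≠ l →
      Disjoint ((t k) • (V*V*V*V)) ((t l) • (V*V*V*V)))
    {T : Finset G} (hT : Set.univ ⊆ (T : Set G) * W) :
    m * covN V W ≤ T.card := by
  classical
  set Tk : ℕ → Finset G := fun k =>
    T.filter (fun τ => ((τ • W) ∩ (t k • (V*V))).Nonempty) with hTk
  have hcover : ∀ k, t k • V ⊆ ↑(Tk k) * W := by
    intro k x hx
    obtain ⟨τ, hτ, w, hw, rfl⟩ := hT (Set.mem_univ x)
    have hx2 : τ * w ∈ t k • (V*V) := by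
      obtain ⟨v, hv, hveq⟩ := hx
      exact ⟨v * 1, Set.mul_mem_mul hv h1V, by simpa [smul_eq_mul] using hveq⟩
    have hτmem : τ ∈ Tk k := by
      rw [hTk, Finset.mem_filter]
      exact ⟨hτ, ⟨τ * w, ⟨w, hw, rfl⟩, hx2⟩⟩
    exact ⟨τ, hτmem, w, hw, rfl⟩
  have hlow : ∀ k, k < m → covN V W ≤ (Tk k).card := by
    intro k _
    rw [← covN_smul (t k) V W]
    exact covN_le (hcover k)
  have hdisjF : ∀ k ∈ Finset.range m, ∀ l ∈ Finset.range m, k ≠ l → Disjoint (Tk k) (Tk l) := by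
    intro k hk l hl hkl
    rw [Finset.mem_range] at hk hl
    rw [Finset.disjoint_left]
    intro τ hτk hτl
    rw [hTk, Finset.mem_filter] at hτk hτl
    obtain ⟨x, ⟨w1, hw1, hxw⟩, p, hp, hxp⟩ := hτk.2
    obtain ⟨x', ⟨w2, hw2, hxw'⟩, p', hp', hxp'⟩ := hτl.2
    simp only [smul_eq_mul] at hxp hxp' hxw hxw'
    -- x = τ * w1 = t k * p, x' = τ * w2 = t l * p'
    have hτeq : τ = t k * p * w1⁻¹ := by
      have : t k * p = τ * w1 := by rw [hxp, hxw]
      rw [this]; group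
    have hx'k : τ * w2 ∈ t k • (V*V*V*V) := by
      refine ⟨p * w1⁻¹ * w2, ?_, ?_⟩
      · have hw1' : w1⁻¹ ∈ V := hWV (by rw [← hWsym]; exact Set.inv_mem_inv.mpr hw1)
        exact Set.mul_mem_mul (Set.mul_mem_mul hp hw1') (hWV hw2)
      · show t k • (p * w1⁻¹ * w2) = τ * w2
        rw [smul_eq_mul, hτeq]; group
    have hx'l : τ * w2 ∈ t l • (V*V*V*V) := by
      refine ⟨p' * 1 * 1, ?_, ?_⟩
      · exact Set.mul_mem_mul (Set.mul_mem_mul hp' h1V) h1V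
      · show t l • (p' * 1 * 1) = τ * w2
        rw [smul_eq_mul, mul_one, mul_one, hxp', hxw']
    exact Set.disjoint_left.mp (hdisj k hk l hl hkl) hx'k hx'l
  calc m * covN V W = ∑ _k ∈ Finset.range m, covN V W := by
        rw [Finset.sum_const, smul_eq_mul, Finset.card_range]
    _ ≤ ∑ k ∈ Finset.range m, (Tk k).card :=
        Finset.sum_le_sum (fun k hk => hlow k (Finset.mem_range.mp hk))
    _ ≤ T.card := by
        rw [← Finset.card_biUnion hdisjF]
        exact Finset.card_le_card (Finset.biUnion_subset.mpr
          (fun i _ => Finset.filter_subset _ _))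



/-- In a T1 topological group, we can find a symmetric open neighborhood of 1 whose 8-fold
product avoids a given finite set not containing 1. -/
lemma sep [TopologicalSpace G] [IsTopologicalGroup G] [T1Space G]
    (Z : Set G) (hZ : Z.Finite) (h1 : (1:G) ∉ Z) :
    ∃ V : Set G, IsOpen V ∧ (1:G) ∈ V ∧ V⁻¹ = V ∧
      ∀ z ∈ Z, z ∉ V*V*V*V*V*V*V*V := by
  have hO : IsOpen Zᶜ := hZ.isClosed.isOpen_compl
  have h1O : (1:G) ∈ Zᶜ := h1
  obtain ⟨W1, hW1o, hW11, hW1⟩ := exists_open_nhds_one_mul_subset (hO.mem_nhds h1O)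
  obtain ⟨W2, hW2o, hW21, hW2⟩ := exists_open_nhds_one_mul_subset (hW1o.mem_nhds hW11)
  obtain ⟨W3, hW3o, hW31, hW3⟩ := exists_open_nhds_one_mul_subset (hW2o.mem_nhds hW21)
  refine ⟨W3 ∩ W3⁻¹, hW3o.inter hW3o.inv, ⟨hW31, by simpa using hW31⟩, by
      ext x
      simp only [Set.mem_inv, Set.mem_inter_iff, inv_inv]
      tauto, ?_⟩
  intro z hz hmem
  set V := W3 ∩ W3⁻¹
  have hVW3 : V ⊆ W3 := Set.inter_subset_left
  have h8 : V*V*V*V*V*V*V*V ⊆ Zᶜ := by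
    have e1 : V*V*V*V*V*V*V*V ⊆ W3*W3*(W3*W3)*(W3*W3*(W3*W3)) := by
      intro x hx
      obtain ⟨x7, hx7, v8, hv8, rfl⟩ := hx
      obtain ⟨x6, hx6, v7, hv7, rfl⟩ := hx7
      obtain ⟨x5, hx5, v6, hv6, rfl⟩ := hx6
      obtain ⟨x4, hx4, v5, hv5, rfl⟩ := hx5
      obtain ⟨x3, hx3, v4, hv4, rfl⟩ := hx4
      obtain ⟨x2, hx2, v3, hv3, rfl⟩ := hx3
      obtain ⟨v1, hv1, v2, hv2, rfl⟩ := hx2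
      refine ⟨v1*v2*(v3*v4), ?_, v5*v6*(v7*v8), ?_, by group⟩
      · exact Set.mul_mem_mul (Set.mul_mem_mul (hVW3 hv1) (hVW3 hv2))
          (Set.mul_mem_mul (hVW3 hv3) (hVW3 hv4))
      · exact Set.mul_mem_mul (Set.mul_mem_mul (hVW3 hv5) (hVW3 hv6))
          (Set.mul_mem_mul (hVW3 hv7) (hVW3 hv8))
    have e2 : W3*W3*(W3*W3)*(W3*W3*(W3*W3)) ⊆ W2*W2*(W2*W2) :=
      Set.mul_subset_mul (Set.mul_subset_mul hW3 hW3) (Set.mul_subset_mul hW3 hW3)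
    have e3 : W2*W2*(W2*W2) ⊆ W1*W1 := Set.mul_subset_mul hW2 hW2
    exact fun x hx => hW1 (e3 (e2 (e1 hx)))
  exact h8 hmem hz

/-- Geometric sum bound. -/
lemma qsum (n : ℕ) : (∑ i ∈ Finset.range n, (1:ℚ)/2^(i+2)) ≤ 1/2 := by
  have key : ∀ n : ℕ, (∑ i ∈ Finset.range n, (1:ℚ)/2^(i+2)) ≤ 1/2 - 1/2^(n+1) := by
    intro n
    induction n with
    | zero => norm_num
    | succ k ih =>
      rw [Finset.sum_range_succ]
      have : (1:ℚ)/2^(k+1+1) + 1/2^(k+2) = 1/2^(k+1) := by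
        rw [show k+1+1 = k+2 by ring]
        field_simp
        ring
      have h2 : (1:ℚ)/2^(k+2) = 1/2^(k+1) - 1/2^(k+2) := by
        field_simp
        ring
      calc (∑ i ∈ Finset.range k, (1:ℚ)/2^(i+2)) + 1/2^(k+2)
          ≤ 1/2 - 1/2^(k+1) + 1/2^(k+2) := by linarith
        _ = 1/2 - 1/2^(k+1+1) := by
            field_simp
            ring
  have := key n
  have hpos : (0:ℚ) < 1/2^(n+1) := by positivity
  linarith

/-- A set which is locally finite (every point of the space has a neighborhood meeting it in a
finite set) in a T1 space is closed and discrete. -/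
lemma closed_discrete_of_locfin {X : Type*} [TopologicalSpace X] [T1Space X] (A : Set X)
    (h : ∀ x : X, ∃ W : Set X, IsOpen W ∧ x ∈ W ∧ (W ∩ A).Finite) :
    IsClosed A ∧ DiscreteTopology A := by
  rw [← isDiscrete_iff_discreteTopology, isClosed_and_discrete_iff]
  intro x
  obtain ⟨W, hWo, hxW, hWA⟩ := h x
  rw [Filter.disjoint_principal_right]
  have hW'o : IsOpen (W \ ((W ∩ A) \ {x})) :=
    hWo.sdiff (hWA.diff : ((W ∩ A) \ {x}).Finite).isClosed
  have hxW' : x ∈ W \ ((W ∩ A) \ {x}) := ⟨hxW, fun hc => hc.2 rfl⟩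
  have hmem : (W \ ((W ∩ A) \ {x})) ∩ {x}ᶜ ∈ nhdsWithin x {x}ᶜ :=
    Filter.inter_mem (nhdsWithin_le_nhds (hW'o.mem_nhds hxW')) self_mem_nhdsWithin
  refine Filter.mem_of_superset hmem ?_
  rintro z ⟨⟨hzW, hz2⟩, hzx⟩ hzA
  exact hzx (by_contra fun h => hz2 ⟨⟨hzW, hzA⟩, fun hs => h hs⟩)



lemma exists_U_of_not_precompact [TopologicalSpace G] [IsTopologicalGroup G]
    (e : ℕ ≃ G) (V : Set G) (hVo : IsOpen V) (hV1 : (1:G) ∈ V)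
    (hVnc : ∀ T : Finset G, ¬ (Set.univ : Set G) ⊆ ↑T * V) :
    ∃ U : ℕ → Set G, (∀ n, IsOpen (U n)) ∧ (∀ m n, m ≤ n → U m ⊆ U n) ∧
      (∀ n, (e n : G) ∈ U n) ∧
      (∀ (n : ℕ) (g : G) (F : Set G), F.Finite → ∃ y, y ∉ F ∧ y ∉ U n ∧ g * y ∉ U n) := by
  classical
  refine ⟨fun n => ⋃ i ∈ Finset.range (n+1), e i • V, ?_, ?_, ?_, ?_⟩
  · intro n
    exact isOpen_iUnion fun i => isOpen_iUnion fun _ => hVo.smul _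
  · intro m n hmn x hx
    simp only [Set.mem_iUnion] at hx ⊢
    obtain ⟨i, hi, hxi⟩ := hx
    exact ⟨i, Finset.mem_range.mpr (lt_of_lt_of_le (Finset.mem_range.mp hi)
      (Nat.succ_le_succ hmn)), hxi⟩
  · intro n
    simp only [Set.mem_iUnion]
    exact ⟨n, Finset.mem_range.mpr (Nat.lt_succ_self n),
      ⟨1, hV1, by simp [smul_eq_mul]⟩⟩
  · intro n g F hF
    by_contra hcon
    push_neg at hcon
    apply hVnc (hF.toFinset ∪ (Finset.range (n+1)).image e ∪
      (Finset.range (n+1)).image (fun i => g⁻¹ * e i))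
    intro x _
    by_cases hxF : x ∈ F
    · exact ⟨x, Finset.mem_coe.mpr (Finset.mem_union_left _ (Finset.mem_union_left _
        (hF.mem_toFinset.mpr hxF))), 1, hV1, mul_one x⟩
    by_cases hxU : x ∈ ⋃ i ∈ Finset.range (n+1), e i • V
    · simp only [Set.mem_iUnion] at hxU
      obtain ⟨i, hi, v, hv, hev⟩ := hxU
      refine ⟨e i, Finset.mem_coe.mpr (Finset.mem_union_left _ (Finset.mem_union_right _
        (Finset.mem_image_of_mem e hi))), v, hv, ?_⟩
      simpa [smul_eq_mul] using hev
    · have hgU := hcon x hxF hxU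
      simp only [Set.mem_iUnion] at hgU
      obtain ⟨i, hi, v, hv, hev⟩ := hgU
      simp only [smul_eq_mul] at hev
      refine ⟨g⁻¹ * e i, Finset.mem_coe.mpr (Finset.mem_union_right _
        (Finset.mem_image_of_mem _ hi)), v, hv, ?_⟩
      show g⁻¹ * e i * v = x
      rw [mul_assoc, hev]
      group


/-- If the eight-fold product of a symmetric set avoids `c⁻¹ * d`, then the corresponding
translates of the four-fold product are disjoint. -/
lemma disj_of_avoid {V : Set G} (hsym : V⁻¹ = V) {c d : G}
    (havoid : c⁻¹ * d ∉ V*V*V*V*V*V*V*V) :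
    Disjoint (c • (V*V*V*V)) (d • (V*V*V*V)) := by
  rw [Set.disjoint_left]
  rintro x ⟨p, hp, hcp⟩ ⟨q, hq, hdq⟩
  simp only [smul_eq_mul] at hcp hdq
  obtain ⟨q3, hq3', q4, hq4, rfl⟩ := hq
  obtain ⟨q2, hq2', q3', hq3, rfl⟩ := hq3'
  obtain ⟨q1, hq1, q2', hq2, rfl⟩ := hq2'
  have hinv : ∀ z : G, z ∈ V → z⁻¹ ∈ V := fun z hz => by
    rw [← hsym]; exact Set.inv_mem_inv.mpr hz
  apply havoid
  have hdq' : d * (q1 * q2' * q3' * q4) = x := hdq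
  have heq : d * (q1 * q2' * q3' * q4) = c * p := hdq'.trans hcp.symm
  have hcd : c⁻¹ * d = ((((p * q4⁻¹) * q3'⁻¹) * q2'⁻¹) * q1⁻¹) := by
    have hd : d = c * p * (q1 * q2' * q3' * q4)⁻¹ := by rw [← heq]; group
    rw [hd]; group
  rw [hcd]
  exact Set.mul_mem_mul (Set.mul_mem_mul (Set.mul_mem_mul
    (Set.mul_mem_mul hp (hinv _ hq4)) (hinv _ hq3)) (hinv _ hq2)) (hinv _ hq1)

lemma exists_U_of_precompact [TopologicalSpace G] [IsTopologicalGroup G] [T2Space G]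
    (e : ℕ ≃ G)
    (hP : ∀ V : Set G, IsOpen V → (1:G) ∈ V → ∃ T : Finset G, (Set.univ : Set G) ⊆ ↑T * V) :
    ∃ U : ℕ → Set G, (∀ n, IsOpen (U n)) ∧ (∀ m n, m ≤ n → U m ⊆ U n) ∧
      (∀ n, (e n : G) ∈ U n) ∧
      (∀ (n : ℕ) (g : G) (F : Set G), F.Finite → ∃ y, y ∉ F ∧ y ∉ U n ∧ g * y ∉ U n) := by
  classical
  -- sequence of shrinking symmetric neighborhoods with separation witnesses
  set Pr : ℕ → Set G → Prop := fun j V => IsOpen V ∧ (1:G) ∈ V ∧ V⁻¹ = V ∧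
    ∀ k l : ℕ, k < j → l < j → k ≠ l → (e k)⁻¹ * e l ∉ V*V*V*V*V*V*V*V with hPrdef
  have hstep : ∀ (j : ℕ) (V : Set G), Pr j V → ∃ W : Set G, Pr (j+1) W ∧ W ⊆ V := by
    intro j V hV
    have hZfin : ({z | ∃ k l : ℕ, k < j+1 ∧ l < j+1 ∧ k ≠ l ∧ z = (e k)⁻¹ * e l} : Set G).Finite := by
      apply Set.Finite.subset (Set.Finite.image (fun p : ℕ × ℕ => (e p.1)⁻¹ * e p.2)
        ((Set.finite_Iio (j+1)).prod (Set.finite_Iio (j+1))))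
      intro z hz
      simp only [Set.mem_setOf_eq] at hz
      obtain ⟨k, l, hk, hl, _, rfl⟩ := hz
      exact ⟨(k, l), ⟨hk, hl⟩, rfl⟩
    have h1Z : (1:G) ∉ ({z | ∃ k l : ℕ, k < j+1 ∧ l < j+1 ∧ k ≠ l ∧ z = (e k)⁻¹ * e l} : Set G) := by
      intro hz
      simp only [Set.mem_setOf_eq] at hz
      obtain ⟨k, l, _, _, hkl, hz1⟩ := hz
      apply hkl
      apply e.injective
      have h2 : e k * (1:G) = e k * ((e k)⁻¹ * e l) := by rw [← hz1]
      simpa using h2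
    obtain ⟨W, hWo, hW1, hWsym, hWavoid⟩ := sep _ hZfin h1Z
    refine ⟨V ∩ W, ⟨hV.1.inter hWo, ⟨hV.2.1, hW1⟩, ?_, ?_⟩, Set.inter_subset_left⟩
    · have hVs : ∀ z : G, z ∈ V → z⁻¹ ∈ V := fun z hz => by
        rw [← hV.2.2.1]; simpa [Set.mem_inv] using hz
      have hWs : ∀ z : G, z ∈ W → z⁻¹ ∈ W := fun z hz => by
        rw [← hWsym]; simpa [Set.mem_inv] using hz
      ext x
      simp only [Set.mem_inv, Set.mem_inter_iff]
      constructor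
      · rintro ⟨h1, h2⟩
        exact ⟨by simpa using hVs _ h1, by simpa using hWs _ h2⟩
      · rintro ⟨h1, h2⟩; exact ⟨hVs x h1, hWs x h2⟩
    · intro k l hk hl hkl hmem
      have hsub : (V ∩ W)*(V ∩ W)*(V ∩ W)*(V ∩ W)*(V ∩ W)*(V ∩ W)*(V ∩ W)*(V ∩ W)
          ⊆ W*W*W*W*W*W*W*W := by
        have h := Set.inter_subset_right (s := V) (t := W)
        exact Set.mul_subset_mul (Set.mul_subset_mul (Set.mul_subset_mul (Set.mul_subset_mul
          (Set.mul_subset_mul (Set.mul_subset_mul (Set.mul_subset_mul h h) h) h) h) h) h) h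
      exact hWavoid _ ⟨k, l, hk, hl, hkl, rfl⟩ (hsub hmem)
  let VS : (j : ℕ) → {V : Set G // Pr j V} := fun j =>
    Nat.rec (motive := fun j => {V : Set G // Pr j V})
      (⟨Set.univ, isOpen_univ, Set.mem_univ 1, Set.inv_univ,
        fun k _ hk => absurd hk (Nat.not_lt_zero k)⟩)
      (fun k V => ⟨(hstep k V.1 V.2).choose, (hstep k V.1 V.2).choose_spec.1⟩) j
  have hVSsucc : ∀ j, (VS (j+1)).1 ⊆ (VS j).1 :=
    fun j => (hstep j (VS j).1 (VS j).2).choose_spec.2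
  have hVSanti : ∀ m n, m ≤ n → (VS n).1 ⊆ (VS m).1 := by
    intro m n hmn
    induction hmn with
    | refl => exact fun x hx => hx
    | step _ ih => exact (hVSsucc _).trans ih
  have hVSo : ∀ j, IsOpen (VS j).1 := fun j => (VS j).2.1
  have hVS1 : ∀ j, (1:G) ∈ (VS j).1 := fun j => (VS j).2.2.1
  have hVSsym : ∀ j, ((VS j).1)⁻¹ = (VS j).1 := fun j => (VS j).2.2.2.1
  have hdisj : ∀ j, ∀ k, k < j → ∀ l, l < j → k ≠ l →
      Disjoint (e k • ((VS j).1*(VS j).1*(VS j).1*(VS j).1))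
               (e l • ((VS j).1*(VS j).1*(VS j).1*(VS j).1)) := by
    intro j k hk l hl hkl
    exact disj_of_avoid (hVSsym j) ((VS j).2.2.2.2 k l hk hl hkl)
  -- the increasing union
  refine ⟨fun n => ⋃ i ∈ Finset.range (n+1), e i • (VS (2^(i+3))).1, ?_, ?_, ?_, ?_⟩
  · intro n
    exact isOpen_iUnion fun i => isOpen_iUnion fun _ => (hVSo _).smul _
  · intro m n hmn x hx
    simp only [Set.mem_iUnion] at hx ⊢
    obtain ⟨i, hi, hxi⟩ := hx
    exact ⟨i, Finset.mem_range.mpr (lt_of_lt_of_le (Finset.mem_range.mp hi)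
      (Nat.succ_le_succ hmn)), hxi⟩
  · intro n
    simp only [Set.mem_iUnion]
    exact ⟨n, Finset.mem_range.mpr (Nat.lt_succ_self n),
      ⟨1, hVS1 _, by simp [smul_eq_mul]⟩⟩
  · intro n g F hF
    by_contra hcon
    push_neg at hcon
    set f : ℕ := hF.toFinset.card with hfdef
    set j : ℕ := max (2^(n+3)) (2 * f + 1) with hjdef
    set Vj : Set G := (VS j).1 with hVjdef
    obtain ⟨T, hTcard, hTcov⟩ := covN_exists (S := (Set.univ : Set G)) (V := Vj)
      (hP Vj (hVSo j) (hVS1 j))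
    set N : ℕ := covN (Set.univ : Set G) Vj with hNdef
    -- lower bound N ≥ j
    have hVjcov : ∀ (S : Set G), ∃ T' : Finset G, S ⊆ ↑T' * Vj := by
      intro S
      obtain ⟨T', hT'⟩ := hP Vj (hVSo j) (hVS1 j)
      exact ⟨T', (Set.subset_univ S).trans hT'⟩
    have hcovpos : ∀ (S : Set G), (1:G) ∈ S → 1 ≤ covN S Vj := by
      intro S hS
      by_contra h0
      obtain ⟨T0, hT0card, hT0⟩ := covN_exists (hVjcov S)
      rw [Nat.lt_one_iff.mp (Nat.lt_of_not_le h0), Finset.card_eq_zero] at hT0card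
      subst hT0card
      simpa using hT0 hS
    have hjN : j ≤ N := by
      have hpack := packing (hVS1 j) (le_refl Vj : Vj ⊆ Vj) (hVSsym j) (hdisj j) hTcov
      calc j = j * 1 := (mul_one j).symm
        _ ≤ j * covN Vj Vj := Nat.mul_le_mul_left j (hcovpos Vj (hVS1 j))
        _ ≤ T.card := hpack
        _ = N := hTcard
    -- lower bounds for the small balls
    have hm_le : ∀ i, i ≤ n → 2^(i+3) ≤ j := by
      intro i hi
      exact le_trans (Nat.pow_le_pow_right (by norm_num) (by omega)) (le_max_left _ _)
    have hball : ∀ i, i ≤ n → 2^(i+3) * covN ((VS (2^(i+3))).1) Vj ≤ N := by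
      intro i hi
      have hWV : Vj ⊆ (VS (2^(i+3))).1 := hVSanti _ _ (hm_le i hi)
      have hpack := packing (hVS1 (2^(i+3))) hWV (hVSsym j) (hdisj (2^(i+3))) hTcov
      rw [hTcard] at hpack
      exact hpack
    -- the covering from the contradiction hypothesis
    set Si : ℕ → Finset G := fun i => (covN_exists (hVjcov (VS (2^(i+3))).1)).choose with hSidef
    have hSispec : ∀ i, (Si i).card = covN ((VS (2^(i+3))).1) Vj ∧
        (VS (2^(i+3))).1 ⊆ ↑(Si i) * Vj :=
      fun i => (covN_exists (hVjcov (VS (2^(i+3))).1)).choose_spec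
    set Tbig : Finset G := hF.toFinset ∪ (Finset.range (n+1)).biUnion
      (fun i => e i • Si i ∪ (g⁻¹ * e i) • Si i) with hTbigdef
    have hTbigcov : (Set.univ : Set G) ⊆ ↑Tbig * Vj := by
      intro x _
      by_cases hxF : x ∈ F
      · exact ⟨x, Finset.mem_coe.mpr (Finset.mem_union_left _ (hF.mem_toFinset.mpr hxF)),
          1, hVS1 j, mul_one x⟩
      by_cases hxU : x ∈ ⋃ i ∈ Finset.range (n+1), e i • (VS (2^(i+3))).1
      · simp only [Set.mem_iUnion] at hxU
        obtain ⟨i, hi, v, hv, hev⟩ := hxU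
        simp only [smul_eq_mul] at hev
        obtain ⟨t, ht, w, hw, htw⟩ := (hSispec i).2 hv
        have htw' : t * w = v := htw
        refine ⟨e i * t, ?_, w, hw, ?_⟩
        · apply Finset.mem_coe.mpr (Finset.mem_union_right _ (Finset.mem_biUnion.mpr
            ⟨i, hi, Finset.mem_union_left _ (Finset.mem_smul_finset.mpr ⟨t, ht, rfl⟩)⟩))
        · show e i * t * w = x
          rw [mul_assoc, htw', hev]
      · have hgU := hcon x hxF hxU
        simp only [Set.mem_iUnion] at hgU
        obtain ⟨i, hi, v, hv, hev⟩ := hgU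
        simp only [smul_eq_mul] at hev
        obtain ⟨t, ht, w, hw, htw⟩ := (hSispec i).2 hv
        have htw' : t * w = v := htw
        refine ⟨g⁻¹ * e i * t, ?_, w, hw, ?_⟩
        · apply Finset.mem_coe.mpr (Finset.mem_union_right _ (Finset.mem_biUnion.mpr
            ⟨i, hi, Finset.mem_union_right _ (Finset.mem_smul_finset.mpr ⟨t, ht, rfl⟩)⟩))
        · show g⁻¹ * e i * t * w = x
          rw [mul_assoc g⁻¹ (e i) t, mul_assoc g⁻¹ (e i * t) w, mul_assoc (e i) t w,
            htw', hev]
          group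
    -- counting
    have hNle : N ≤ Tbig.card := covN_le hTbigcov
    have hTbigcard : Tbig.card ≤ f + ∑ i ∈ Finset.range (n+1), 2 * (Si i).card := by
      calc Tbig.card ≤ hF.toFinset.card + ((Finset.range (n+1)).biUnion
            (fun i => e i • Si i ∪ (g⁻¹ * e i) • Si i)).card := Finset.card_union_le _ _
        _ ≤ f + ∑ i ∈ Finset.range (n+1), (e i • Si i ∪ (g⁻¹ * e i) • Si i).card := by
            rw [hfdef]
            exact Nat.add_le_add_left (Finset.card_biUnion_le) _
        _ ≤ f + ∑ i ∈ Finset.range (n+1), 2 * (Si i).card := by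
            apply Nat.add_le_add_left
            apply Finset.sum_le_sum
            intro i _
            calc (e i • Si i ∪ (g⁻¹ * e i) • Si i).card
                ≤ (e i • Si i).card + ((g⁻¹ * e i) • Si i).card := Finset.card_union_le _ _
              _ = 2 * (Si i).card := by
                  rw [Finset.card_smul_finset, Finset.card_smul_finset]; ring
    have hsi : ∀ i ∈ Finset.range (n+1), ((Si i).card : ℚ) ≤ (N:ℚ) / 2^(i+3) := by
      intro i hi
      have hin : i ≤ n := Nat.lt_succ_iff.mp (Finset.mem_range.mp hi)
      have hb := hball i hin
      rw [← (hSispec i).1] at hb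
      rw [le_div_iff₀ (by positivity)]
      calc ((Si i).card : ℚ) * 2^(i+3) = ((2^(i+3) * (Si i).card : ℕ) : ℚ) := by
            push_cast; ring
        _ ≤ (N:ℚ) := by exact_mod_cast hb
    have hsum : (∑ i ∈ Finset.range (n+1), 2 * ((Si i).card:ℚ)) ≤ (N:ℚ) * (1/2) := by
      calc (∑ i ∈ Finset.range (n+1), 2 * ((Si i).card:ℚ))
          ≤ ∑ i ∈ Finset.range (n+1), 2 * ((N:ℚ) / 2^(i+3)) := by
            apply Finset.sum_le_sum
            intro i hi
            have := hsi i hi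
            linarith
        _ = (N:ℚ) * ∑ i ∈ Finset.range (n+1), (1:ℚ)/2^(i+2) := by
            rw [Finset.mul_sum]
            apply Finset.sum_congr rfl
            intro i _
            rw [show (i+3) = (i+2)+1 by ring, pow_succ]
            field_simp
        _ ≤ (N:ℚ) * (1/2) :=
            mul_le_mul_of_nonneg_left (qsum (n+1)) (by positivity)
    have hNQ : (N:ℚ) ≤ (f:ℚ) + ∑ i ∈ Finset.range (n+1), 2 * ((Si i).card:ℚ) := by
      have h := le_trans hNle hTbigcard
      calc (N:ℚ) ≤ ((f + ∑ i ∈ Finset.range (n+1), 2 * (Si i).card : ℕ) : ℚ) := by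
            exact_mod_cast h
        _ = (f:ℚ) + ∑ i ∈ Finset.range (n+1), 2 * ((Si i).card:ℚ) := by push_cast; ring
    have hjq : (2*(f:ℚ)+1) ≤ (j:ℚ) := by
      have : 2*f+1 ≤ j := le_max_right _ _
      exact_mod_cast this
    have hjNq : (j:ℚ) ≤ (N:ℚ) := by exact_mod_cast hjN
    linarith


lemma main_construction [TopologicalSpace G] [T1Space G]
    (e : ℕ ≃ G) (U : ℕ → Set G) (hUo : ∀ n, IsOpen (U n))
    (hUmono : ∀ m n, m ≤ n → U m ⊆ U n) (hUmem : ∀ n, (e n : G) ∈ U n)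
    (hrich : ∀ (n : ℕ) (g : G) (F : Set G), F.Finite → ∃ y, y ∉ F ∧ y ∉ U n ∧ g * y ∉ U n) :
    ∃ A : Set G, IsClosed A ∧ DiscreteTopology A ∧
      (∀ g : G, g ≠ 1 → (g • A ∩ A).Finite) ∧ A * A⁻¹ = Set.univ := by
  classical
  -- the "forbidden" finite set at each step
  set bd : Set G → G → Set G :=
    fun S g => S ∪ g⁻¹ • S ∪ S*S⁻¹*S ∪ g⁻¹ • (S*S⁻¹*S) with hbddef
  have bdfin : ∀ (S : Set G), S.Finite → ∀ g : G, (bd S g).Finite := by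
    intro S hS g
    have h3 : (S*S⁻¹*S).Finite := (hS.mul hS.inv).mul hS
    exact ((hS.union hS.smul_set).union h3).union h3.smul_set
  -- the recursively chosen points
  let pk : ℕ → {S : Set G // S.Finite} → G :=
    fun n S => (hrich n (e n) (bd S.1 (e n)) (bdfin S.1 S.2 (e n))).choose
  let FS : ℕ → {S : Set G // S.Finite} :=
    fun n => Nat.rec ⟨∅, Set.finite_empty⟩
      (fun k S => ⟨insert (e k * pk k S) (insert (pk k S) S.1), (S.2.insert _).insert _⟩) n
  let y : ℕ → G := fun n => pk n (FS n)
  let a : ℕ → G := fun n => e n * y n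
  have hFSsucc : ∀ n, (FS (n+1)).1 = insert (a n) (insert (y n) (FS n).1) := fun n => rfl
  have hy : ∀ n, y n ∉ bd (FS n).1 (e n) ∧ y n ∉ U n ∧ e n * y n ∉ U n :=
    fun n => (hrich n (e n) (bd (FS n).1 (e n)) (bdfin (FS n).1 (FS n).2 (e n))).choose_spec
  set A : Set G := {x | ∃ n, x = a n ∨ x = y n} with hA
  have hmemFS : ∀ n x, x ∈ (FS n).1 ↔ ∃ i, i < n ∧ (x = a i ∨ x = y i) := by
    intro n
    induction n with
    | zero => intro x; simp [show (FS 0).1 = ∅ from rfl]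
    | succ k ih =>
      intro x
      rw [hFSsucc k]
      simp only [Set.mem_insert_iff, ih x]
      constructor
      · rintro (h | h | ⟨i, hi, h⟩)
        · exact ⟨k, Nat.lt_succ_self k, Or.inl h⟩
        · exact ⟨k, Nat.lt_succ_self k, Or.inr h⟩
        · exact ⟨i, Nat.lt_succ_of_lt hi, h⟩
      · rintro ⟨i, hi, h⟩
        rcases Nat.lt_succ_iff_lt_or_eq.mp hi with hik | rfl
        · exact Or.inr (Or.inr ⟨i, hik, h⟩)
        · rcases h with h | h
          exacts [Or.inl h, Or.inr (Or.inl h)]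
  have hFSmono : ∀ m n, m ≤ n → (FS m).1 ⊆ (FS n).1 := by
    intro m n hmn x hx
    rw [hmemFS] at hx ⊢
    obtain ⟨i, hi, h⟩ := hx
    exact ⟨i, lt_of_lt_of_le hi hmn, h⟩
  have hsubA : ∀ n, (FS n).1 ⊆ A := by
    intro n x hx
    obtain ⟨i, _, h⟩ := (hmemFS n x).mp hx
    exact ⟨i, h⟩
  have hyU : ∀ n m, m ≤ n → y n ∉ U m ∧ a n ∉ U m := by
    intro n m hmn
    exact ⟨fun hc => (hy n).2.1 (hUmono m n hmn hc),
           fun hc => (hy n).2.2 (hUmono m n hmn hc)⟩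
  -- local finiteness
  have locfin : ∀ x : G, ∃ W : Set G, IsOpen W ∧ x ∈ W ∧ (W ∩ A).Finite := by
    intro x
    refine ⟨U (e.symm x), hUo _, by simpa using hUmem (e.symm x), ?_⟩
    apply (FS (e.symm x)).2.subset
    rintro z ⟨hzU, n, hz⟩
    rw [hmemFS]
    rcases Nat.lt_or_ge n (e.symm x) with hlt | hge
    · exact ⟨n, hlt, hz⟩
    · exfalso
      have := hyU n (e.symm x) hge
      rcases hz with rfl | rfl
      exacts [this.2 hzU, this.1 hzU]
  obtain ⟨hclosed, hdiscrete⟩ := closed_discrete_of_locfin A locfin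
  refine ⟨A, hclosed, hdiscrete, ?_, ?_⟩
  · -- thinness
    intro g hg
    set Q : ℕ → Set G := fun n => (FS n).1 * ((FS n).1)⁻¹ with hQdef
    have hQmono : ∀ m n, m ≤ n → Q m ⊆ Q n := by
      rintro m n hmn z ⟨u, hu, v, hv, rfl⟩
      exact ⟨u, hFSmono m n hmn hu, v,
        Set.mem_inv.mpr (hFSmono m n hmn (Set.mem_inv.mp hv)), rfl⟩
    have hQsymm : ∀ n z, z ∈ Q n → z⁻¹ ∈ Q n := by
      rintro n z ⟨u, hu, v, hv, rfl⟩
      exact ⟨v⁻¹, Set.mem_inv.mp hv, u⁻¹, Set.mem_inv.mpr (by simpa using hu), by group⟩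
    have hratio : ∀ n p, (p = a n ∨ p = y n) → ∀ q ∈ (FS n).1, p * q⁻¹ ∉ Q n := by
      rintro n p hp q hq hmem
      have hp3 : p ∈ (FS n).1 * ((FS n).1)⁻¹ * (FS n).1 := by
        have : (p * q⁻¹) * q = p := by group
        exact this ▸ Set.mul_mem_mul hmem hq
      rcases hp with rfl | rfl
      · -- p = a n : then y n ∈ (e n)⁻¹ • (S*S⁻¹*S), contradiction
        have : y n ∈ (e n)⁻¹ • ((FS n).1 * ((FS n).1)⁻¹ * (FS n).1) :=
          ⟨e n * y n, hp3, by simp [smul_eq_mul, mul_assoc]⟩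
        exact (hy n).1 (Or.inr this)
      · exact (hy n).1 (Or.inl (Or.inr hp3))
    have hnotin : ∀ n, a n ∉ (FS n).1 ∧ y n ∉ (FS n).1 := by
      intro n
      constructor
      · intro hc
        have : y n ∈ (e n)⁻¹ • (FS n).1 := ⟨a n, hc, by simp [smul_eq_mul, a, mul_assoc]⟩
        exact (hy n).1 (Or.inl (Or.inl (Or.inr this)))
      · exact fun hc => (hy n).1 (Or.inl (Or.inl (Or.inl hc)))
    set Cross : ℕ → Prop := fun n => ∃ p, (p = a n ∨ p = y n) ∧
      ∃ q ∈ (FS n).1, (p = g * q ∨ q = g * p) with hCrossdef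
    have hcross1 : ∀ n, Cross n → g ∉ Q n := by
      rintro n ⟨p, hp, q, hq, hpq | hpq⟩ hgQ
      · have h' : g = p * q⁻¹ := by rw [hpq]; group
        exact hratio n p hp q hq (h' ▸ hgQ)
      · have h' : g⁻¹ = p * q⁻¹ := by rw [hpq]; group
        exact hratio n p hp q hq (h' ▸ hQsymm n g hgQ)
    have hcross2 : ∀ n, Cross n → g ∈ Q (n+1) := by
      rintro n ⟨p, hp, q, hq, hpq | hpq⟩
      · have hpF : p ∈ (FS (n+1)).1 := by
          rw [hFSsucc n]
          rcases hp with rfl | rfl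
          exacts [Set.mem_insert _ _, Set.mem_insert_of_mem _ (Set.mem_insert _ _)]
        have hqF : q ∈ (FS (n+1)).1 := hFSmono n (n+1) (Nat.le_succ n) hq
        have h' : g = p * q⁻¹ := by rw [hpq]; group
        exact h' ▸ ⟨p, hpF, q⁻¹, Set.inv_mem_inv.mpr hqF, rfl⟩
      · have hpF : p ∈ (FS (n+1)).1 := by
          rw [hFSsucc n]
          rcases hp with rfl | rfl
          exacts [Set.mem_insert _ _, Set.mem_insert_of_mem _ (Set.mem_insert _ _)]
        have hqF : q ∈ (FS (n+1)).1 := hFSmono n (n+1) (Nat.le_succ n) hq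
        have h' : g = q * p⁻¹ := by rw [hpq]; group
        exact h' ▸ ⟨q, hqF, p⁻¹, Set.inv_mem_inv.mpr hpF, rfl⟩
    have huniq : ∀ n n', Cross n → Cross n' → n = n' := by
      intro n n' hn hn'
      rcases Nat.lt_trichotomy n n' with h | h | h
      · exact absurd (hQmono (n+1) n' h (hcross2 n hn)) (hcross1 n' hn')
      · exact h
      · exact absurd (hQmono (n'+1) n h (hcross2 n' hn')) (hcross1 n hn)
    have hkey : ∀ x, x ∈ (g • A) ∩ A →
        x = a (e.symm g) ∨ x = y (e.symm g⁻¹) ∨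
        ∃ n, Cross n ∧ (x = a n ∨ x = y n ∨ x = g * a n ∨ x = g * y n) := by
      rintro x ⟨hx1, hx2⟩
      obtain ⟨v, hvA, hgv⟩ := hx1
      simp only [smul_eq_mul] at hgv
      have hgxv : g = x * v⁻¹ := by rw [← hgv]; group
      obtain ⟨i, hi⟩ := hx2
      obtain ⟨j, hj⟩ := hvA
      rcases Nat.lt_trichotomy j i with hji | rfl | hij
      · have hqF : v ∈ (FS i).1 := (hmemFS i v).mpr ⟨j, hji, hj⟩
        have hcr : Cross i := ⟨x, hi, v, hqF, Or.inl hgv.symm⟩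
        rcases hi with rfl | rfl
        · exact Or.inr (Or.inr ⟨i, hcr, Or.inl rfl⟩)
        · exact Or.inr (Or.inr ⟨i, hcr, Or.inr (Or.inl rfl)⟩)
      · -- same stage
        rcases hi with rfl | rfl <;> rcases hj with hv' | hv'
        · rw [hv'] at hgxv
          have : g = 1 := by rw [hgxv]; group
          exact absurd this hg
        · rw [hv'] at hgxv
          have hgei : g = e j := by
            rw [hgxv]; exact mul_inv_cancel_right (e j) (y j)
          have : e.symm g = j := by rw [hgei]; simp
          exact Or.inl (by rw [this])
        · rw [hv'] at hgxv
          have hgei : g = (e j)⁻¹ := by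
            rw [hgxv]
            show y j * (e j * y j)⁻¹ = (e j)⁻¹
            group
          have : e.symm g⁻¹ = j := by rw [hgei]; simp
          exact Or.inr (Or.inl (by rw [this]))
        · rw [hv'] at hgxv
          have : g = 1 := by rw [hgxv]; group
          exact absurd this hg
      · have hqF : x ∈ (FS j).1 := (hmemFS j x).mpr ⟨i, hij, hi⟩
        have hcr : Cross j := ⟨v, hj, x, hqF, Or.inr hgv.symm⟩
        rcases hj with rfl | rfl
        · exact Or.inr (Or.inr ⟨j, hcr, Or.inr (Or.inr (Or.inl hgv.symm))⟩)
        · exact Or.inr (Or.inr ⟨j, hcr, Or.inr (Or.inr (Or.inr hgv.symm))⟩)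
    by_cases hC : ∃ n, Cross n
    · obtain ⟨n₁, hn₁⟩ := hC
      have hfin : ({a (e.symm g), y (e.symm g⁻¹), a n₁, y n₁, g * a n₁, g * y n₁} : Set G).Finite := by
        apply Set.Finite.insert; apply Set.Finite.insert; apply Set.Finite.insert
        apply Set.Finite.insert; apply Set.Finite.insert; exact Set.finite_singleton _
      apply hfin.subset
      intro x hx
      rcases hkey x hx with h | h | ⟨n, hcr, h⟩
      · exact Or.inl h
      · exact Or.inr (Or.inl h)
      · have hne : n = n₁ := huniq n n₁ hcr hn₁
        subst hne
        rcases h with h | h | h | h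
        · exact Or.inr (Or.inr (Or.inl h))
        · exact Or.inr (Or.inr (Or.inr (Or.inl h)))
        · exact Or.inr (Or.inr (Or.inr (Or.inr (Or.inl h))))
        · exact Or.inr (Or.inr (Or.inr (Or.inr (Or.inr h))))
    · have hfin : ({a (e.symm g), y (e.symm g⁻¹)} : Set G).Finite :=
        (Set.finite_singleton _).insert _
      apply hfin.subset
      intro x hx
      rcases hkey x hx with h | h | ⟨n, hcr, _⟩
      · exact Or.inl h
      · exact Or.inr h
      · exact absurd ⟨n, hcr⟩ hC
  · -- A * A⁻¹ = univ
    apply Set.eq_univ_of_forall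
    intro g
    have hprod : a (e.symm g) * (y (e.symm g))⁻¹ = g := by
      show e (e.symm g) * y (e.symm g) * (y (e.symm g))⁻¹ = g
      rw [mul_inv_cancel_right, Equiv.apply_symm_apply]
    have hane : a (e.symm g) ∈ A := ⟨e.symm g, Or.inl rfl⟩
    have hyne : y (e.symm g) ∈ A := ⟨e.symm g, Or.inr rfl⟩
    exact hprod ▸ Set.mul_mem_mul hane (Set.inv_mem_inv.mpr hyne)


end CountableThinAux

open CountableThinAux in
/-- Every countable Hausdorff topological group `G` has a subset `A` that is closed,
discrete, and thin (`g • A ∩ A` is finite for each `g ≠ 1`) such that `G = A * A⁻¹`. -/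
theorem countable_group_eq_mul_inv_of_thin_closed_discrete
    (G : Type*) [Group G] [TopologicalSpace G] [IsTopologicalGroup G]
    [T2Space G] [Countable G] :
    ∃ A : Set G, IsClosed A ∧ DiscreteTopology A ∧
      (∀ g : G, g ≠ 1 → (g • A ∩ A).Finite) ∧ A * A⁻¹ = Set.univ := by
  classical
  rcases finite_or_infinite G with hfin | hinf
  · refine ⟨Set.univ, isClosed_univ, inferInstance, fun g _ => Set.toFinite _, ?_⟩
    rw [Set.inv_univ, Set.univ_mul_univ]
  · letI := Encodable.ofCountable G
    letI := Denumerable.ofEncodableOfInfinite G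
    let e : ℕ ≃ G := (Denumerable.eqv G).symm
    by_cases hP : ∀ V : Set G, IsOpen V → (1:G) ∈ V →
        ∃ T : Finset G, (Set.univ : Set G) ⊆ ↑T * V
    · obtain ⟨U, h1, h2, h3, h4⟩ := exists_U_of_precompact e hP
      exact main_construction e U h1 h2 h3 h4
    · push_neg at hP
      obtain ⟨V, hVo, hV1, hVnc⟩ := hP
      obtain ⟨U, h1, h2, h3, h4⟩ := exists_U_of_not_precompact e V hVo hV1 hVnc
      exact main_construction e U h1 h2 h3 h4
end
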